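/- arXiv:2107.07207 — 7 statements merged into one kernel-verified Lean document; each statement's English description precedes it below -/
import Mathlib

section
/- Let (f_n) be a sequence of entire functions with an admissible sequence of growth exponents (λ_n) and associated growth function µ. Suppose (f_n) converges locally uniformly on a nonempty connected open set D ⊆ ℂ to a non-constant holomorphic function f. Then every point of ∂D ∩ cl{z ∈ ℂ : µ(z) > 1} is a cluster point of zeros of (f_n). -/
open Filter Topology Metric Set


private lemma normSq_lt_aux {A : ℝ} {z : ℂ} (hA : 0 < A) (hz : z.re < A) :
    ‖z‖ < ‖(↑(2*A) : ℂ) - z‖ := by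
  rw [Complex.norm_def, Complex.norm_def]
  apply Real.sqrt_lt_sqrt (Complex.normSq_nonneg _)
  simp only [Complex.normSq_apply, Complex.sub_re, Complex.sub_im, Complex.ofReal_re,
    Complex.ofReal_im]
  nlinarith [hz, hA]

private lemma borelCaratheodory' {L : ℂ → ℂ} {c : ℂ} {R A : ℝ}
    (hL : DifferentiableOn ℂ L (ball c R)) (h0 : L c = 0) (hA : 0 < A)
    (hre : ∀ z ∈ ball c R, (L z).re < A)
    {s : ℝ} (hs : 0 < s) (hsR : s < R) :
    ∀ z ∈ closedBall c s, ‖L z‖ ≤ 2 * A * s / (R - s) := by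
  have hR : 0 < R := hs.trans hsR
  set φ : ℂ → ℂ := fun ζ => L ζ / ((↑(2*A) : ℂ) - L ζ) with hφ
  have hlt : ∀ ζ ∈ ball c R, ‖L ζ‖ < ‖(↑(2*A) : ℂ) - L ζ‖ :=
    fun ζ hζ => normSq_lt_aux hA (hre ζ hζ)
  have hden : ∀ ζ ∈ ball c R, ((↑(2*A) : ℂ) - L ζ) ≠ 0 := by
    intro ζ hζ h
    have h2 := hlt ζ hζ
    rw [h, norm_zero] at h2
    exact absurd h2 (not_lt.mpr (norm_nonneg _))
  have hφd : DifferentiableOn ℂ φ (ball c R) :=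
    hL.div ((differentiableOn_const _).sub hL) hden
  have hφc : φ c = 0 := by simp [hφ, h0]
  have hmaps : MapsTo φ (ball c R) (ball (φ c) 1) := by
    intro ζ hζ
    rw [hφc, mem_ball_zero_iff, hφ]
    simp only [norm_div]
    rw [div_lt_one (lt_of_le_of_lt (norm_nonneg _) (hlt ζ hζ))]
    exact hlt ζ hζ
  have hsch : ∀ z ∈ closedBall c s, ‖φ z‖ ≤ s / R := by
    intro z hz
    rw [mem_closedBall] at hz
    have hzR : z ∈ ball c R := mem_ball.mpr (lt_of_le_of_lt hz hsR)
    have h3 := Complex.dist_le_div_mul_dist_of_mapsTo_ball hφd (hmaps.mono_right ball_subset_closedBall) hzR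
    rw [hφc, dist_zero_right] at h3
    calc ‖φ z‖ ≤ 1 / R * dist z c := h3
      _ ≤ 1 / R * s := by gcongr
      _ = s / R := by ring
  intro z hz
  have hzR : z ∈ ball c R := mem_ball.mpr (lt_of_le_of_lt (mem_closedBall.mp hz) hsR)
  have hφz : φ z * ((↑(2*A) : ℂ) - L z) = L z := div_mul_cancel₀ _ (hden z hzR)
  have hid : (↑(2*A) : ℂ) * φ z = L z * (1 + φ z) := by linear_combination hφz
  have h1 : (1:ℝ) - s / R ≤ ‖1 + φ z‖ := by
    have h4 := norm_sub_norm_le (1:ℂ) (-(φ z))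
    simp only [sub_neg_eq_add, norm_one, norm_neg] at h4
    have h2 := hsch z hz
    linarith
  have hsR' : (0:ℝ) < 1 - s/R := by
    rw [sub_pos]
    exact (div_lt_one hR).mpr hsR
  have hnorm : ‖L z‖ * (1 - s/R) ≤ 2*A*(s/R) := by
    calc ‖L z‖ * (1 - s/R) ≤ ‖L z‖ * ‖1 + φ z‖ := by
          exact mul_le_mul_of_nonneg_left h1 (norm_nonneg _)
      _ = ‖(↑(2*A) : ℂ) * φ z‖ := by rw [hid, norm_mul]
      _ = 2*A*‖φ z‖ := by
          rw [norm_mul, Complex.norm_real, Real.norm_eq_abs, abs_of_pos (by linarith : (0:ℝ) < 2*A)]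
      _ ≤ 2*A*(s/R) := by
          exact mul_le_mul_of_nonneg_left (hsch z hz) (by linarith)
  calc ‖L z‖ ≤ 2*A*(s/R) / (1 - s/R) := by
        rw [le_div_iff₀ hsR']
        exact hnorm
    _ = 2*A*s/(R-s) := by
        have h5 : R ≠ 0 := hR.ne'
        have h6 : R - s ≠ 0 := (by linarith : (0:ℝ) < R - s).ne'
        field_simp


private lemma coeff_bound' {h : ℂ → ℂ} {c : ℂ} {a B : ℝ} (ha : 0 < a)
    (hcont : ContinuousOn h (sphere c a)) (hB : ∀ z ∈ sphere c a, ‖h z‖ ≤ B) (k : ℕ) :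
    ‖(cauchyPowerSeries h c a).coeff k‖ ≤ B * (a⁻¹)^k := by
  have hcm : Continuous (fun θ : ℝ => ‖h (circleMap c a θ)‖) :=
    (hcont.comp_continuous (continuous_circleMap c a)
      (fun θ => circleMap_mem_sphere c ha.le θ)).norm
  have hint : ∫ θ in (0:ℝ)..2*Real.pi, ‖h (circleMap c a θ)‖ ≤ 2*Real.pi*B := by
    have h2 : ∫ θ in (0:ℝ)..2*Real.pi, ‖h (circleMap c a θ)‖ ≤ ∫ _ in (0:ℝ)..2*Real.pi, B := by
      apply intervalIntegral.integral_mono_on Real.two_pi_pos.le (hcm.intervalIntegrable _ _)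
        intervalIntegrable_const
      intro θ _
      exact hB _ (circleMap_mem_sphere c ha.le θ)
    simpa using h2
  have hintpos : 0 ≤ ∫ θ in (0:ℝ)..2*Real.pi, ‖h (circleMap c a θ)‖ :=
    intervalIntegral.integral_nonneg Real.two_pi_pos.le (fun θ _ => norm_nonneg _)
  have hstep := norm_cauchyPowerSeries_le h c a k
  rw [← FormalMultilinearSeries.norm_apply_eq_norm_coef]
  calc ‖cauchyPowerSeries h c a k‖
      ≤ ((2*Real.pi)⁻¹ * ∫ θ in (0:ℝ)..2*Real.pi, ‖h (circleMap c a θ)‖) * |a|⁻¹^k := hstep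
    _ ≤ ((2*Real.pi)⁻¹ * (2*Real.pi*B)) * |a|⁻¹^k := by
        gcongr
    _ = B * (a⁻¹)^k := by
        rw [abs_of_pos ha]
        field_simp


private lemma exists_log' {g : ℂ → ℂ} {c : ℂ} {R R' : ℝ} (hR' : 0 < R') (hRR : R' < R)
    (hg : DifferentiableOn ℂ g (ball c R))
    (hne : ∀ z ∈ ball c R, g z ≠ 0) :
    ∃ L : ℂ → ℂ, DifferentiableOn ℂ L (ball c R') ∧ L c = 0 ∧
      ∀ z ∈ ball c R', g z = g c * Complex.exp (L z) := by
  have hR : 0 < R := hR'.trans hRR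
  have hder : DifferentiableOn ℂ (deriv g) (ball c R) :=
    ((hg.analyticOnNhd isOpen_ball).deriv).differentiableOn
  set h : ℂ → ℂ := fun z => deriv g z / g z with hh
  have hhd : DifferentiableOn ℂ h (ball c R) := hder.div hg hne
  set t : NNReal := ⟨(R' + R)/2, by positivity⟩ with ht
  have htc : (t : ℝ) = (R' + R)/2 := rfl
  have ht0 : 0 < t := by
    rw [← NNReal.coe_lt_coe, htc]
    · push_cast; linarith
  have hR''R : (t : ℝ) < R := by rw [htc]; linarith
  have hR'R'' : R' < (t : ℝ) := by rw [htc]; linarith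
  have hsub : closedBall c (t : ℝ) ⊆ ball c R := closedBall_subset_ball hR''R
  have hps : HasFPowerSeriesOnBall h (cauchyPowerSeries h c (t : ℝ)) c t :=
    (hhd.mono hsub).hasFPowerSeriesOnBall ht0
  set p := cauchyPowerSeries h c (t : ℝ) with hp
  -- summability of coefficient bounds
  have hrad : ((R'.toNNReal : NNReal) : ENNReal) < p.radius := by
    refine lt_of_lt_of_le ?_ hps.r_le
    rw [ENNReal.coe_lt_coe, ← NNReal.coe_lt_coe, Real.coe_toNNReal R' hR'.le]
    exact hR'R''
  have hu : Summable (fun k => ‖p.coeff k‖ * R' ^ k) := by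
    have h11 := p.summable_norm_mul_pow hrad
    rw [Real.coe_toNNReal R' hR'.le] at h11
    refine h11.congr fun k => ?_
    rw [p.norm_apply_eq_norm_coef]
  -- the primitive as a term-wise integrated series
  set G : ℕ → ℂ → ℂ := fun k z => (((k : ℂ) + 1)⁻¹) * ((z - c)^(k+1) * p.coeff k) with hG
  set L : ℂ → ℂ := fun z => ∑' k, G k z with hL
  have hGd : ∀ (k : ℕ) (z : ℂ), z ∈ ball c R' →
      HasDerivAt (G k) ((z - c)^k * p.coeff k) z := by
    intro k z _
    have h1 : HasDerivAt (fun z : ℂ => (z - c)^(k+1)) (((k:ℂ)+1) * (z-c)^k) z := by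
      have := ((hasDerivAt_id z).sub_const c).fun_pow (k+1)
      simpa [Nat.add_sub_cancel, mul_one] using this
    have h2 := (h1.mul_const (p.coeff k)).const_mul (((k : ℂ) + 1)⁻¹)
    refine h2.congr_deriv ?_
    have hk : ((k : ℂ) + 1) ≠ 0 := by
      have h10 : ((k+1 : ℕ) : ℂ) ≠ 0 := Nat.cast_ne_zero.mpr (Nat.succ_ne_zero k)
      push_cast at h10
      exact h10
    rw [← mul_assoc, ← mul_assoc, inv_mul_cancel₀ hk, one_mul]
  have hGb : ∀ (k : ℕ) (z : ℂ), z ∈ ball c R' →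
      ‖(z - c)^k * p.coeff k‖ ≤ ‖p.coeff k‖ * R' ^ k := by
    intro k z hz
    rw [norm_mul, norm_pow, mul_comm]
    have hzc : ‖z - c‖ ≤ R' := by
      rw [← dist_eq_norm]
      exact (mem_ball.mp hz).le
    exact mul_le_mul_of_nonneg_left (pow_le_pow_left₀ (norm_nonneg _) hzc k) (norm_nonneg _)
  have hG0 : ∀ k, G k c = 0 := by
    intro k
    simp [hG]
  have hLc : L c = 0 := by
    rw [hL]
    simp only [hG0]
    exact tsum_zero
  have hG0s : Summable (fun k => G k c) := by
    simp only [hG0]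
    exact summable_zero
  have hsum_eq : ∀ z ∈ ball c R', HasSum (fun k => (z - c)^k * p.coeff k) (h z) := by
    intro z hz
    have hzt : z ∈ Metric.eball c t := by
      rw [Metric.emetric_ball_nnreal]
      exact ball_subset_ball hR'R''.le hz
    have h5 := hps.hasSum_sub hzt
    simpa only [FormalMultilinearSeries.apply_eq_pow_smul_coeff, smul_eq_mul] using h5
  have hLd : ∀ z ∈ ball c R', HasDerivAt L (h z) z := by
    intro z hz
    have h6 := hasDerivAt_tsum_of_isPreconnected hu isOpen_ball
      (convex_ball c R').isPreconnected hGd hGb (mem_ball_self hR') hG0s hz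
    rwa [(hsum_eq z hz).tsum_eq] at h6
  have hLdiff : DifferentiableOn ℂ L (ball c R') := fun z hz =>
    ((hLd z hz).differentiableAt).differentiableWithinAt
  refine ⟨L, hLdiff, hLc, ?_⟩
  -- g * exp (-L) is constant
  set q : ℂ → ℂ := fun z => g z * Complex.exp (-L z) with hq
  have hqd : ∀ z ∈ ball c R', HasDerivAt q 0 z := by
    intro z hz
    have hzR : z ∈ ball c R := ball_subset_ball hRR.le hz
    have hgz : HasDerivAt g (deriv g z) z :=
      (hg.differentiableAt (isOpen_ball.mem_nhds hzR)).hasDerivAt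
    have hexp : HasDerivAt (fun z => Complex.exp (-L z)) (Complex.exp (-L z) * (-(h z))) z :=
      ((hLd z hz).neg).cexp
    have h7 := hgz.fun_mul hexp
    refine h7.congr_deriv ?_
    have hgz0 : g z ≠ 0 := hne z hzR
    rw [hh]
    simp only
    field_simp
    ring
  have hqdiff : DifferentiableOn ℂ q (ball c R') := fun z hz =>
    ((hqd z hz).differentiableAt).differentiableWithinAt
  have hconst : ∀ z ∈ ball c R', q z = q c := by
    intro z hz
    apply (convex_ball c R').is_const_of_fderivWithin_eq_zero hqdiff ?_ hz (mem_ball_self hR')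
    intro x hx
    rw [fderivWithin_of_isOpen isOpen_ball hx, (hqd x hx).hasFDerivAt.fderiv]
    refine ContinuousLinearMap.ext fun v => ?_
    simp
  intro z hz
  have h8 := hconst z hz
  rw [hq] at h8
  simp only [hLc, neg_zero, Complex.exp_zero, mul_one] at h8
  have h9 := congrArg (fun w => w * Complex.exp (L z)) h8
  rwa [mul_assoc, ← Complex.exp_add, neg_add_cancel, Complex.exp_zero, mul_one] at h9

private lemma key_bound' {N : ℂ → ℂ} {w z' : ℂ} {R ρ A ε : ℝ}
    (hR : 0 < R) (hρ : 0 < ρ) (hρR : ρ < R) (hA : 0 < A) (hε : 0 < ε)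
    (hN : DifferentiableOn ℂ N (ball w R)) (h0 : N w = 0)
    (hreA : ∀ z ∈ ball w R, (N z).re < A)
    (hreε : ∀ z ∈ ball w ρ, (N z).re < ε)
    (hz' : dist z' w ≤ R/8) (K : ℕ) :
    ‖N z'‖ ≤ 2*ε*K*(max (4*dist z' w/ρ) 1)^K + 4*A*(1/2)^K := by
  set d : ℝ := dist z' w with hd
  have hd0 : 0 ≤ d := dist_nonneg
  set T : ℝ := max (4*d/ρ) 1 with hT
  have hT1 : (1:ℝ) ≤ T := le_max_right _ _
  have hT0 : (0:ℝ) ≤ T := by linarith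
  -- Borel-Caratheodory at both scales
  have hbigBC : ∀ z ∈ closedBall w (R/2), ‖N z‖ ≤ 2*A := by
    intro z hz
    calc ‖N z‖ ≤ 2*A*(R/2)/(R - R/2) :=
          borelCaratheodory' hN h0 hA hreA (by linarith) (by linarith) z hz
      _ = 2*A := by rw [show R - R/2 = R/2 by ring]; field_simp
  have hsmallBC : ∀ z ∈ closedBall w (ρ/2), ‖N z‖ ≤ 2*ε := by
    intro z hz
    calc ‖N z‖ ≤ 2*ε*(ρ/2)/(ρ - ρ/2) :=
          borelCaratheodory' (hN.mono (ball_subset_ball hρR.le)) h0 hε hreε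
            (by linarith) (by linarith) z hz
      _ = 2*ε := by rw [show ρ - ρ/2 = ρ/2 by ring]; field_simp
  -- power series at radius R/4 and ρ/4
  set t₁ : NNReal := ⟨R/4, by positivity⟩ with ht₁
  set t₂ : NNReal := ⟨ρ/4, by positivity⟩ with ht₂
  have ht₁c : (t₁ : ℝ) = R/4 := rfl
  have ht₂c : (t₂ : ℝ) = ρ/4 := rfl
  have ht₁0 : 0 < t₁ := by rw [← NNReal.coe_lt_coe, ht₁c]; push_cast; linarith
  have ht₂0 : 0 < t₂ := by rw [← NNReal.coe_lt_coe, ht₂c]; push_cast; linarith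
  have hP : HasFPowerSeriesOnBall N (cauchyPowerSeries N w (t₁ : ℝ)) w t₁ :=
    (hN.mono (by rw [ht₁c]; exact closedBall_subset_ball (by linarith))).hasFPowerSeriesOnBall ht₁0
  have hQ : HasFPowerSeriesOnBall N (cauchyPowerSeries N w (t₂ : ℝ)) w t₂ :=
    (hN.mono (by rw [ht₂c]; exact closedBall_subset_ball (by linarith))).hasFPowerSeriesOnBall ht₂0
  set P := cauchyPowerSeries N w (t₁ : ℝ) with hPdef
  have hPQ : P = cauchyPowerSeries N w (t₂ : ℝ) :=
    hP.hasFPowerSeriesAt.eq_formalMultilinearSeries hQ.hasFPowerSeriesAt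
  -- coefficient bounds
  have hcA : ∀ k, ‖P.coeff k‖ ≤ (2*A) * ((R/4)⁻¹)^k := by
    intro k
    rw [hPdef, ht₁c]
    apply coeff_bound' (by linarith)
      ((hN.mono (fun z hz => ?_)).continuousOn)
      (fun z hz => hbigBC z ?_) k
    · rw [mem_ball]
      rw [mem_sphere] at hz
      linarith [hz.le, hR]
    · rw [mem_closedBall]
      rw [mem_sphere] at hz
      linarith [hz.le]
  have hcε : ∀ k, ‖P.coeff k‖ ≤ (2*ε) * ((ρ/4)⁻¹)^k := by
    intro k
    rw [hPQ, ht₂c]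
    apply coeff_bound' (by linarith)
      ((hN.mono (fun z hz => ?_)).continuousOn)
      (fun z hz => hsmallBC z ?_) k
    · rw [mem_ball]
      rw [mem_sphere] at hz
      linarith [hz.le, hρR]
    · rw [mem_closedBall]
      rw [mem_sphere] at hz
      linarith [hz.le]
  -- the sum
  set S : ℕ → ℂ := fun k => (z' - w)^k * P.coeff k with hS
  have hsum : HasSum S (N z') := by
    have hy : z' ∈ Metric.eball w t₁ := by
      rw [Metric.emetric_ball_nnreal, mem_ball, ht₁c]
      linarith
    have h5 := hP.hasSum_sub hy
    simpa only [FormalMultilinearSeries.apply_eq_pow_smul_coeff, smul_eq_mul] using h5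
  have hynorm : ‖z' - w‖ = d := by rw [hd, dist_eq_norm]
  have hSnorm : ∀ k, ‖S k‖ = d^k * ‖P.coeff k‖ := by
    intro k
    rw [hS]
    simp only [norm_mul, norm_pow, hynorm]
  have hSA : ∀ k, ‖S k‖ ≤ 2*A*(1/2)^k := by
    intro k
    rw [hSnorm]
    calc d^k * ‖P.coeff k‖ ≤ d^k * ((2*A) * ((R/4)⁻¹)^k) := by
          exact mul_le_mul_of_nonneg_left (hcA k) (pow_nonneg hd0 k)
      _ = 2*A*(d * (R/4)⁻¹)^k := by rw [mul_pow]; ring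
      _ ≤ 2*A*(1/2)^k := by
          have h6 : d * (R/4)⁻¹ ≤ 1/2 := by
            have h7 : d * (R/4)⁻¹ ≤ (R/8) * (R/4)⁻¹ := by
              apply mul_le_mul_of_nonneg_right hz'
              positivity
            have h8 : (R/8) * (R/4)⁻¹ = 1/2 := by field_simp; ring
            linarith
          have h9 : (0:ℝ) ≤ d * (R/4)⁻¹ := by positivity
          exact mul_le_mul_of_nonneg_left (pow_le_pow_left₀ h9 h6 k) (by linarith)
  have hSε : ∀ k, k ≤ K → ‖S k‖ ≤ 2*ε*T^K := by
    intro k hk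
    rw [hSnorm]
    calc d^k * ‖P.coeff k‖ ≤ d^k * ((2*ε) * ((ρ/4)⁻¹)^k) := by
          exact mul_le_mul_of_nonneg_left (hcε k) (pow_nonneg hd0 k)
      _ = 2*ε*(d * (ρ/4)⁻¹)^k := by rw [mul_pow]; ring
      _ ≤ 2*ε*T^k := by
          have h6 : d * (ρ/4)⁻¹ ≤ T := by
            have h7 : d * (ρ/4)⁻¹ = 4*d/ρ := by field_simp
            rw [h7]
            exact le_max_left _ _
          have h9 : (0:ℝ) ≤ d * (ρ/4)⁻¹ := by positivity
          exact mul_le_mul_of_nonneg_left (pow_le_pow_left₀ h9 h6 k) (by linarith)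
      _ ≤ 2*ε*T^K := by
          exact mul_le_mul_of_nonneg_left (pow_le_pow_right₀ hT1 hk) (by linarith)
  -- split and estimate
  have hsummable : Summable S := hsum.summable
  have hgeo : Summable (fun i : ℕ => 2*A*(1/2)^(i+K)) := by
    have h10 : Summable (fun i : ℕ => (2*A*(1/2)^K) * (1/2)^i) :=
      (summable_geometric_of_lt_one (by norm_num) (by norm_num)).mul_left _
    refine h10.congr fun i => ?_
    rw [pow_add]
    ring
  have htail_summable : Summable (fun i => ‖S (i+K)‖) :=
    Summable.of_nonneg_of_le (fun i => norm_nonneg _) (fun i => hSA (i+K)) hgeo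
  have hsplit : (∑ i ∈ Finset.range K, S i) + ∑' i, S (i + K) = ∑' i, S i :=
    hsummable.sum_add_tsum_nat_add K
  have hNz : N z' = (∑ i ∈ Finset.range K, S i) + ∑' i, S (i + K) := by
    rw [hsplit]
    exact hsum.tsum_eq.symm
  have hpart : ‖∑ i ∈ Finset.range K, S i‖ ≤ K * (2*ε*T^K) := by
    calc ‖∑ i ∈ Finset.range K, S i‖ ≤ ∑ i ∈ Finset.range K, ‖S i‖ := norm_sum_le _ _
      _ ≤ ∑ _i ∈ Finset.range K, 2*ε*T^K := by
          apply Finset.sum_le_sum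
          intro i hi
          exact hSε i (Finset.mem_range.mp hi).le
      _ = K * (2*ε*T^K) := by
          rw [Finset.sum_const, Finset.card_range, nsmul_eq_mul]
  have htail : ‖∑' i, S (i + K)‖ ≤ 4*A*(1/2)^K := by
    calc ‖∑' i, S (i + K)‖ ≤ ∑' i, ‖S (i + K)‖ := norm_tsum_le_tsum_norm htail_summable
      _ ≤ ∑' i : ℕ, 2*A*(1/2)^(i+K) := htail_summable.tsum_le_tsum (fun i => hSA (i+K)) hgeo
      _ = (2*A*(1/2)^K) * (1-1/2)⁻¹ := by
          rw [show (fun i : ℕ => 2*A*(1/2:ℝ)^(i+K)) = fun i : ℕ => (2*A*(1/2:ℝ)^K) * (1/2)^i by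
            funext i; rw [pow_add]; ring]
          rw [tsum_mul_left, tsum_geometric_of_lt_one (by norm_num) (by norm_num)]
      _ = 4*A*(1/2)^K := by norm_num; ring
  calc ‖N z'‖ ≤ ‖∑ i ∈ Finset.range K, S i‖ + ‖∑' i, S (i + K)‖ := by
        rw [hNz]; exact norm_add_le _ _
    _ ≤ K * (2*ε*T^K) + 4*A*(1/2)^K := add_le_add hpart htail
    _ = 2*ε*K*T^K + 4*A*(1/2)^K := by ring

set_option maxHeartbeats 1000000 in
/-- proto-Jentzsch theorem. If `(f n)` is a sequence of entire functions with an
admissible sequence of growth exponents `lam` and associated growth function `μ`, and `(f n)`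
converges locally uniformly on a nonempty connected open set `D` to a non-constant holomorphic
function `F`, then every point of `∂D ∩ cl{μ > 1}` is a cluster point of zeros of `(f n)`. -/
theorem stmt_0
    (f : ℕ → ℂ → ℂ) (hf : ∀ n, Differentiable ℂ (f n))
    (lam : ℕ → ℝ) (hlam : StrictMono lam) (hlam' : Tendsto lam atTop atTop)
    (hadm : ∀ K : Set ℂ, IsCompact K →
      ∃ C : ℝ, ∀ᶠ n in atTop, ∀ z ∈ K, ‖f n z‖ ^ (1 / lam n) ≤ C)
    (μ : ℂ → ℝ)
    (hμ : ∀ z : ℂ, μ z = limsup (fun n => ‖f n z‖ ^ (1 / lam n)) atTop)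
    (D : Set ℂ) (hD : IsOpen D) (hDconn : IsConnected D)
    (F : ℂ → ℂ) (hFhol : DifferentiableOn ℂ F D)
    (hconv : TendstoLocallyUniformlyOn f F atTop D)
    (hnc : ¬ ∃ c : ℂ, ∀ z ∈ D, F z = c)
    (z₀ : ℂ) (hz₀ : z₀ ∈ frontier D ∩ closure {z : ℂ | 1 < μ z}) :
    ∀ U ∈ 𝓝 z₀, {n : ℕ | ∃ z ∈ U, f n z = 0}.Infinite := by
  intro U hU
  by_contra hfin
  rw [Set.not_infinite] at hfin
  -- eventually no zeros in U
  have hev_nozero : ∀ᶠ n in atTop, ∀ z ∈ U, f n z ≠ 0 := by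
    rcases hfin.bddAbove with ⟨N₀, hN₀⟩
    refine eventually_atTop.mpr ⟨N₀+1, fun n hn z hz h0 => ?_⟩
    have : n ≤ N₀ := hN₀ ⟨z, hz, h0⟩
    omega
  -- radius
  obtain ⟨r₀, hr₀, hballU⟩ := Metric.mem_nhds_iff.mp hU
  set r : ℝ := r₀/3 with hrdef
  have hr : 0 < r := by positivity
  have h2rU : closedBall z₀ (2*r) ⊆ U := by
    refine subset_trans ?_ hballU
    intro z hz
    rw [mem_closedBall] at hz
    rw [mem_ball]
    rw [hrdef] at hz
    linarith
  -- admissible bound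
  obtain ⟨C, hC⟩ := hadm (closedBall z₀ (2*r)) (isCompact_closedBall _ _)
  set M : ℝ := Real.log (max C 1) with hM
  have hM0 : 0 ≤ M := Real.log_nonneg (le_max_right _ _)
  obtain ⟨hz₀D, hz₀μ⟩ := hz₀
  have hz₀cl : z₀ ∈ closure D := by
    have h0 := hz₀D
    rw [frontier_eq_closure_inter_closure] at h0
    exact h0.1
  -- point of D near z₀
  obtain ⟨dpt, hdD, hdist⟩ : ∃ x ∈ D, dist z₀ x < r/24 :=
    Metric.mem_closure_iff.mp hz₀cl (r/24) (by positivity)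
  -- find w with F w ≠ 0 near z₀
  have hFan : AnalyticAt ℂ F dpt := hFhol.analyticAt (hD.mem_nhds hdD)
  obtain ⟨w, hwD, hwball, hFw⟩ : ∃ w, w ∈ D ∧ dist z₀ w < r/12 ∧ F w ≠ 0 := by
    rcases hFan.eventually_eq_zero_or_eventually_ne_zero with hcase | hcase
    · exfalso
      apply hnc
      refine ⟨0, fun z hz => ?_⟩
      exact (hFhol.analyticOnNhd hD).eqOn_zero_of_preconnected_of_eventuallyEq_zero
        hDconn.isPreconnected hdD hcase hz
    · have hmem : ∀ᶠ z in 𝓝 dpt, z ∈ ball dpt (r/24) ∩ D :=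
        (isOpen_ball.inter hD).eventually_mem ⟨mem_ball_self (by positivity), hdD⟩
      have hcomb := hcase.and (eventually_nhdsWithin_of_eventually_nhds hmem)
      obtain ⟨w, hw1, hw2, hw3⟩ := hcomb.exists
      refine ⟨w, hw3, ?_, hw1⟩
      calc dist z₀ w ≤ dist z₀ dpt + dist dpt w := dist_triangle _ _ _
        _ < r/24 + r/24 := by
            have := mem_ball.mp hw2
            rw [dist_comm] at this
            exact add_lt_add hdist this
        _ = r/12 := by ring
  -- point with μ > 1 near z₀
  obtain ⟨z', hz'μ, hz'ball⟩ : ∃ z', 1 < μ z' ∧ dist z₀ z' < r/12 := by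
    obtain ⟨b, hb1, hb2⟩ := Metric.mem_closure_iff.mp hz₀μ (r/12) (by positivity)
    exact ⟨b, hb1, hb2⟩
  have hz'w : dist z' w ≤ r/6 := by
    calc dist z' w ≤ dist z' z₀ + dist z₀ w := dist_triangle _ _ _
      _ ≤ r/12 + r/12 := by
          rw [dist_comm z' z₀]
          exact add_le_add hz'ball.le hwball.le
      _ = r/6 := by ring
  -- the good neighborhood of w
  set m : ℝ := ‖F w‖/4 with hm
  have hm0 : 0 < m := by
    rw [hm]
    have := norm_pos_iff.mpr hFw
    positivity
  set W : Set ℂ := D ∩ F ⁻¹' (ball (F w) (2*m)) with hW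
  have hWopen : IsOpen W := hFhol.continuousOn.isOpen_inter_preimage hD isOpen_ball
  have hwW : w ∈ W := ⟨hwD, by
    rw [Set.mem_preimage]
    exact mem_ball_self (by positivity)⟩
  obtain ⟨ρ₁, hρ₁, hρ₁sub⟩ := Metric.nhds_basis_closedBall.mem_iff.mp (hWopen.mem_nhds hwW)
  set ρ : ℝ := min ρ₁ (r/24) with hρdef
  have hρ : 0 < ρ := lt_min hρ₁ (by positivity)
  have hρr : ρ ≤ r/24 := min_le_right _ _
  have hρsub : closedBall w ρ ⊆ W := subset_trans (closedBall_subset_closedBall (min_le_left _ _)) hρ₁sub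
  have hFbounds : ∀ z ∈ closedBall w ρ, 2*m < ‖F z‖ ∧ ‖F z‖ < 6*m := by
    intro z hz
    have hzW := hρsub hz
    have h1 : dist (F z) (F w) < 2*m := by
      have := hzW.2
      rwa [Set.mem_preimage, mem_ball] at this
    rw [dist_eq_norm] at h1
    have h2 := norm_sub_norm_le (F z) (F w)
    have h3 := norm_sub_norm_le (F w) (F z)
    rw [norm_sub_rev (F w)] at h3
    have h4 : ‖F w‖ = 4*m := by rw [hm]; ring
    constructor <;> [linarith; linarith]
  -- uniform convergence on closedBall w ρ
  have hKsub : closedBall w ρ ⊆ D := fun z hz => (hρsub hz).1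
  have hucv : TendstoUniformlyOn f F atTop (closedBall w ρ) :=
    (tendstoLocallyUniformlyOn_iff_forall_isCompact hD).mp hconv _ hKsub
      (isCompact_closedBall _ _)
  have hmev : ∀ᶠ n in atTop, ∀ z ∈ closedBall w ρ, dist (F z) (f n z) < m :=
    Metric.tendstoUniformlyOn_iff.mp hucv m hm0
  -- constants
  set c₀ : ℝ := |Real.log m| + |Real.log (7*m)| + 1 with hc₀def
  have hc₀1 : 1 ≤ c₀ := by
    rw [hc₀def]
    have := abs_nonneg (Real.log m)
    have := abs_nonneg (Real.log (7*m))
    linarith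
  have hlogbound : ∀ x : ℝ, m ≤ x → x ≤ 7*m → |Real.log x| ≤ c₀ - 1 := by
    intro x h1 h2
    have ha1 := abs_nonneg (Real.log m)
    have ha2 := abs_nonneg (Real.log (7*m))
    rw [abs_le]
    constructor
    · have h3 : Real.log m ≤ Real.log x := Real.log_le_log hm0 h1
      have h4 := neg_abs_le (Real.log m)
      rw [hc₀def]
      linarith
    · have h3 : Real.log x ≤ Real.log (7*m) := Real.log_le_log (lt_of_lt_of_le hm0 h1) h2
      have h4 := le_abs_self (Real.log (7*m))
      rw [hc₀def]
      linarith
  set A : ℝ := M + c₀ + 1 with hA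
  have hA0 : 0 < A := by rw [hA]; linarith
  set T : ℝ := max (4*dist z' w/ρ) 1 with hT
  -- geometry
  have hballwR : ball w (3*r/2) ⊆ closedBall z₀ (2*r) := by
    intro z hz
    rw [mem_ball] at hz
    rw [mem_closedBall]
    calc dist z z₀ ≤ dist z w + dist w z₀ := dist_triangle _ _ _
      _ ≤ 3*r/2 + r/12 := by
          rw [dist_comm w z₀]
          exact add_le_add hz.le hwball.le
      _ ≤ 2*r := by linarith
  -- main eventual bound
  have hmain : ∀ᶠ n in atTop, ∀ K : ℕ,
      |(lam n)⁻¹ * Real.log (‖f n z'‖)| ≤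
        (4*c₀*K*T^K + c₀) * (lam n)⁻¹ + 4*A*(1/2)^K := by
    filter_upwards [hev_nozero, hC, hmev, hlam'.eventually_ge_atTop 1] with n hn1 hn2 hn3 hn4
    have hln : (0:ℝ) < lam n := by linarith
    have hlinv : (0:ℝ) < (lam n)⁻¹ := by positivity
    have hlinv1 : (lam n)⁻¹ ≤ 1 := by
      rw [inv_le_one_iff₀]
      right; exact hn4
    -- no zeros
    have hnz : ∀ z ∈ ball w (3*r/2), f n z ≠ 0 := fun z hz => hn1 z (h2rU (hballwR hz))
    obtain ⟨L, hLd, hLc, hLeq⟩ := exists_log' (show (0:ℝ) < 4*r/3 by positivity)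
      (show 4*r/3 < 3*r/2 by linarith) ((hf n).differentiableOn) hnz
    -- abs bounds near w
    have hfnw : m ≤ ‖f n w‖ ∧ ‖f n w‖ ≤ 7*m := by
      have h5 := hn3 w (mem_closedBall_self hρ.le)
      have h6 := hFbounds w (mem_closedBall_self hρ.le)
      rw [dist_eq_norm] at h5
      have h7 := norm_sub_norm_le (F w) (f n w)
      have h8 := norm_sub_norm_le (f n w) (F w)
      rw [norm_sub_rev (f n w)] at h8
      constructor <;> linarith
    have hfnz : ∀ z ∈ closedBall w ρ, m ≤ ‖f n z‖ ∧ ‖f n z‖ ≤ 7*m := by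
      intro z hz
      have h5 := hn3 z hz
      have h6 := hFbounds z hz
      rw [dist_eq_norm] at h5
      have h7 := norm_sub_norm_le (F z) (f n z)
      have h8 := norm_sub_norm_le (f n z) (F z)
      rw [norm_sub_rev (f n z)] at h8
      constructor <;> linarith
    -- log identity
    have habs : ∀ z ∈ ball w (4*r/3),
        Real.log (‖f n z‖) = Real.log (‖f n w‖) + (L z).re := by
      intro z hz
      rw [hLeq z hz, norm_mul, Complex.norm_exp, Real.log_mul, Real.log_exp]
      · exact (norm_ne_zero_iff.mpr (hnz w (mem_ball_self (by positivity))))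
      · exact Real.exp_ne_zero _
    -- upper bound from admissibility
    have hub : ∀ z ∈ closedBall z₀ (2*r),
        (lam n)⁻¹ * Real.log (‖f n z‖) ≤ M := by
      intro z hz
      have hzne : f n z ≠ 0 := hn1 z (h2rU hz)
      have hpos : 0 < ‖f n z‖ := norm_pos_iff.mpr hzne
      have h5 : ‖f n z‖ ^ (1/lam n) ≤ max C 1 :=
        le_trans (hn2 z hz) (le_max_left _ _)
      have h6 : Real.log (‖f n z‖ ^ (1/lam n)) ≤ M :=
        Real.log_le_log (Real.rpow_pos_of_pos hpos _) h5
      rwa [Real.log_rpow hpos, one_div] at h6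
    -- bound on |log |f n w||
    have hlogw : |Real.log (‖f n w‖)| ≤ c₀ - 1 :=
      hlogbound _ hfnw.1 hfnw.2
    -- the N function
    set Nf : ℂ → ℂ := fun z => (((lam n)⁻¹ : ℝ) : ℂ) * L z with hNf
    have hNd : DifferentiableOn ℂ Nf (ball w (4*r/3)) := hLd.const_mul _
    have hN0 : Nf w = 0 := by rw [hNf]; simp [hLc]
    have hNre : ∀ z, (Nf z).re = (lam n)⁻¹ * (L z).re := by
      intro z
      rw [hNf]
      exact Complex.re_ofReal_mul _ _
    have hballsub : ball w (4*r/3) ⊆ ball w (3*r/2) := ball_subset_ball (by linarith)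
    have hreA : ∀ z ∈ ball w (4*r/3), (Nf z).re < A := by
      intro z hz
      rw [hNre]
      have h5 : (L z).re = Real.log (‖f n z‖) - Real.log (‖f n w‖) := by
        have := habs z hz
        linarith
      rw [h5, mul_sub]
      have h6 := hub z (hballwR (hballsub hz))
      have h7 : (lam n)⁻¹ * Real.log (‖f n w‖) ≥ -(c₀-1) := by
        have h8 : -(c₀-1) ≤ Real.log (‖f n w‖) := by
          have := neg_abs_le (Real.log (‖f n w‖))
          linarith
        nlinarith [hlinv.le, hlinv1, abs_nonneg (Real.log (‖f n w‖)), hlogw]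
      rw [hA]
      linarith
    have hρsmall : ball w ρ ⊆ ball w (4*r/3) := ball_subset_ball (by linarith)
    have hreε : ∀ z ∈ ball w ρ, (Nf z).re < 2*c₀*(lam n)⁻¹ := by
      intro z hz
      rw [hNre]
      have h5 : (L z).re = Real.log (‖f n z‖) - Real.log (‖f n w‖) := by
        have := habs z (hρsmall hz)
        linarith
      have hfz := hfnz z (ball_subset_closedBall hz)
      have hlz := hlogbound _ hfz.1 hfz.2
      have h6 : (L z).re ≤ 2*(c₀-1) := by
        rw [h5]
        have := le_abs_self (Real.log (‖f n z‖))
        have := neg_abs_le (Real.log (‖f n w‖))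
        linarith
      have h7 : (lam n)⁻¹ * (L z).re ≤ (lam n)⁻¹ * (2*(c₀-1)) :=
        mul_le_mul_of_nonneg_left h6 hlinv.le
      have h8 : (lam n)⁻¹ * (2*(c₀-1)) < 2*c₀*(lam n)⁻¹ := by
        have : (0:ℝ) < 2*(lam n)⁻¹ := by positivity
        nlinarith
      linarith
    -- apply key bound
    have hε0 : (0:ℝ) < 2*c₀*(lam n)⁻¹ := by positivity
    intro K
    have hkey := key_bound' (show (0:ℝ) < 4*r/3 by positivity) hρ
      (by linarith : ρ < 4*r/3) hA0 hε0 hNd hN0 hreA hreε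
      (by linarith : dist z' w ≤ (4*r/3)/8) K
    -- convert to the goal
    have hz'mem : z' ∈ ball w (4*r/3) := by
      rw [mem_ball]
      have : dist z' w ≤ r/6 := hz'w
      linarith
    have h9 : (lam n)⁻¹ * Real.log (‖f n z'‖) =
        (Nf z').re + (lam n)⁻¹ * Real.log (‖f n w‖) := by
      rw [hNre]
      have := habs z' hz'mem
      rw [this]
      ring
    have h10 : |(Nf z').re| ≤ ‖Nf z'‖ := by
      exact Complex.abs_re_le_norm _
    have h11 : |(lam n)⁻¹ * Real.log (‖f n w‖)| ≤ c₀ * (lam n)⁻¹ := by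
      rw [abs_mul, abs_of_pos hlinv]
      calc (lam n)⁻¹ * |Real.log (‖f n w‖)| ≤ (lam n)⁻¹ * (c₀ - 1) :=
            mul_le_mul_of_nonneg_left hlogw hlinv.le
        _ ≤ c₀ * (lam n)⁻¹ := by nlinarith
    have h12 : 2*(2*c₀*(lam n)⁻¹)*K*T^K = (4*c₀*K*T^K) * (lam n)⁻¹ := by ring
    calc |(lam n)⁻¹ * Real.log (‖f n z'‖)|
        ≤ |(Nf z').re| + |(lam n)⁻¹ * Real.log (‖f n w‖)| := by
          rw [h9]; exact abs_add_le _ _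
      _ ≤ ‖Nf z'‖ + c₀ * (lam n)⁻¹ := add_le_add h10 h11
      _ ≤ (2*(2*c₀*(lam n)⁻¹)*K*T^K + 4*A*(1/2)^K) + c₀ * (lam n)⁻¹ := by
          exact add_le_add (by rw [← hT] at hkey; exact hkey) le_rfl
      _ = (4*c₀*K*T^K + c₀) * (lam n)⁻¹ + 4*A*(1/2)^K := by ring
  -- the limit
  have htends : Tendsto (fun n => (lam n)⁻¹ * Real.log (‖f n z'‖)) atTop (𝓝 0) := by
    rw [NormedAddCommGroup.tendsto_nhds_zero]
    intro ε hε
    have hgeo : Tendsto (fun K : ℕ => 4*A*(1/2:ℝ)^K) atTop (𝓝 0) := by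
      have h1 := tendsto_pow_atTop_nhds_zero_of_lt_one (by norm_num : (0:ℝ) ≤ 1/2)
        (by norm_num : (1/2:ℝ) < 1)
      have h2 := h1.const_mul (4*A)
      simpa using h2
    obtain ⟨K, hK⟩ := (hgeo.eventually (gt_mem_nhds (half_pos hε))).exists
    have hinv : Tendsto (fun n => (lam n)⁻¹) atTop (𝓝 0) := hlam'.inv_tendsto_atTop
    have hfirst : Tendsto (fun n => (4*c₀*K*T^K + c₀) * (lam n)⁻¹) atTop (𝓝 0) := by
      have h2 := hinv.const_mul (4*c₀*K*T^K + c₀)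
      simpa using h2
    filter_upwards [hmain, hfirst.eventually (gt_mem_nhds (half_pos hε))] with n h1 h2
    rw [Real.norm_eq_abs]
    calc |(lam n)⁻¹ * Real.log (‖f n z'‖)|
        ≤ (4*c₀*K*T^K + c₀) * (lam n)⁻¹ + 4*A*(1/2)^K := h1 K
      _ < ε/2 + ε/2 := add_lt_add h2 hK
      _ = ε := add_halves ε
  -- conclude
  have hz'U : z' ∈ closedBall z₀ (2*r) := by
    rw [mem_closedBall, dist_comm]
    linarith [hz'ball.le]
  have hab : Tendsto (fun n => ‖f n z'‖ ^ (1/(lam n))) atTop (𝓝 1) := by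
    have hexp : Tendsto (fun n => Real.exp ((lam n)⁻¹ * Real.log (‖f n z'‖)))
        atTop (𝓝 1) := by
      have h1 := (Real.continuous_exp.continuousAt (x := (0:ℝ))).tendsto.comp htends
      simpa [Function.comp_def] using h1
    refine hexp.congr' ?_
    filter_upwards [hev_nozero, hlam'.eventually_gt_atTop 0] with n h1 h2
    have hpos : 0 < ‖f n z'‖ := norm_pos_iff.mpr (h1 z' (h2rU hz'U))
    rw [Real.rpow_def_of_pos hpos, one_div, mul_comm]
  have hlim : limsup (fun n => ‖f n z'‖ ^ (1/lam n)) atTop = 1 := hab.limsup_eq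
  rw [hμ z', hlim] at hz'μ
  exact lt_irrefl 1 hz'μ
end

section
/- Let (f_n) be a sequence of entire functions with an admissible sequence of growth exponents (λ_n) and associated growth function µ. (i) If the sequence (f_n(z₀)) converges at a point z₀ ∈ ℂ, then µ(z₀) ≤ 1, and moreover µ(z₀) = 1 if the limit is nonzero. (ii) If (f_n) converges pointwise on an open set D ⊆ ℂ, then D ∩ cl{z : µ(z) > 1} = ∅. -/
open Filter Topology

private lemma tendsto_rpow_inv_one {M : ℝ} (hM : 0 < M) (lam : ℕ → ℝ)
    (hlam' : Tendsto lam atTop atTop) :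
    Tendsto (fun n => M ^ (1 / lam n)) atTop (𝓝 1) := by
  have h0 : Tendsto (fun n => 1 / lam n) atTop (𝓝 0) := by
    have := hlam'.inv_tendsto_atTop
    simp only [one_div]; exact this
  have hc : ContinuousAt (fun x : ℝ => M ^ x) 0 :=
    Real.continuousAt_const_rpow hM.ne'
  have := hc.tendsto.comp h0
  simpa [Function.comp_def] using this

/-- (i) if `(f n z₀)` converges then `μ z₀ ≤ 1`, with equality if the limit is
nonzero; (ii) if `(f n)` converges pointwise on an open set `D`, then
`D ∩ cl{z : μ z > 1} = ∅`. -/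
theorem stmt_2
    (f : ℕ → ℂ → ℂ) (hf : ∀ n, Differentiable ℂ (f n))
    (lam : ℕ → ℝ) (hlam : StrictMono lam) (hlam' : Tendsto lam atTop atTop)
    (hadm : ∀ K : Set ℂ, IsCompact K →
      ∃ C : ℝ, ∀ᶠ n in atTop, ∀ z ∈ K, ‖f n z‖ ^ (1 / lam n) ≤ C)
    (μ : ℂ → ℝ)
    (hμ : ∀ z : ℂ, μ z = limsup (fun n => ‖f n z‖ ^ (1 / lam n)) atTop) :
    (∀ (z₀ : ℂ) (L : ℂ), Tendsto (fun n => f n z₀) atTop (𝓝 L) →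
      μ z₀ ≤ 1 ∧ (L ≠ 0 → μ z₀ = 1)) ∧
    (∀ D : Set ℂ, IsOpen D →
      (∀ z ∈ D, ∃ L : ℂ, Tendsto (fun n => f n z) atTop (𝓝 L)) →
      D ∩ closure {z : ℂ | 1 < μ z} = ∅) := by
  have main : ∀ (z₀ : ℂ) (L : ℂ), Tendsto (fun n => f n z₀) atTop (𝓝 L) →
      μ z₀ ≤ 1 ∧ (L ≠ 0 → μ z₀ = 1) := by
    intro z₀ L hL
    set u : ℕ → ℝ := fun n => ‖f n z₀‖ ^ (1 / lam n) with hu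
    set M : ℝ := ‖L‖ + 1 with hM
    have hMpos : 0 < M := by positivity
    have habs : Tendsto (fun n => ‖f n z₀‖) atTop (𝓝 (‖L‖)) :=
      (continuous_norm.tendsto L).comp hL
    have hlampos : ∀ᶠ n in atTop, 0 < lam n := hlam'.eventually_gt_atTop 0
    have hub : ∀ᶠ n in atTop, ‖f n z₀‖ ≤ M :=
      habs.eventually_le_const (by simp [hM])
    have hule : ∀ᶠ n in atTop, u n ≤ M ^ (1 / lam n) := by
      filter_upwards [hub, hlampos] with n h1 h2
      exact Real.rpow_le_rpow (norm_nonneg _) h1 (by positivity)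
    have hMt : Tendsto (fun n => M ^ (1 / lam n)) atTop (𝓝 1) :=
      tendsto_rpow_inv_one hMpos lam hlam'
    have hb : IsBoundedUnder (· ≥ ·) atTop u :=
      isBoundedUnder_of ⟨0, fun n => Real.rpow_nonneg (norm_nonneg _) _⟩
    have hcb : IsCoboundedUnder (· ≤ ·) atTop u := hb.isCoboundedUnder_le
    have hμle : μ z₀ ≤ 1 := by
      rw [hμ]
      have : limsup u atTop ≤ limsup (fun n => M ^ (1 / lam n)) atTop :=
        limsup_le_limsup hule hcb hMt.isBoundedUnder_le
      rw [hMt.limsup_eq] at this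
      exact this
    refine ⟨hμle, fun hL0 => ?_⟩
    set m : ℝ := ‖L‖ / 2 with hm
    have hmpos : 0 < m := by
      have : 0 < ‖L‖ := by simpa using hL0
      positivity
    have hlb : ∀ᶠ n in atTop, m ≤ ‖f n z₀‖ := habs.eventually_const_le (by
      have : 0 < ‖L‖ := by simpa using hL0
      simp only [hm]; linarith)
    have huge : ∀ᶠ n in atTop, m ^ (1 / lam n) ≤ u n := by
      filter_upwards [hlb, hlampos] with n h1 h2
      exact Real.rpow_le_rpow hmpos.le h1 (by positivity)
    have hmt : Tendsto (fun n => m ^ (1 / lam n)) atTop (𝓝 1) :=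
      tendsto_rpow_inv_one hmpos lam hlam'
    have hut : Tendsto u atTop (𝓝 1) :=
      tendsto_of_tendsto_of_tendsto_of_le_of_le' hmt hMt huge hule
    rw [hμ]
    exact hut.limsup_eq
  refine ⟨main, fun D hD hconv => ?_⟩
  have hsub : {z : ℂ | 1 < μ z} ⊆ Dᶜ := by
    intro z hz hzD
    obtain ⟨L, hL⟩ := hconv z hzD
    exact absurd (main z L hL).1 (not_le.mpr hz)
  have hcl : closure {z : ℂ | 1 < μ z} ⊆ Dᶜ :=
    closure_minimal hsub hD.isClosed_compl
  rw [Set.eq_empty_iff_forall_notMem]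
  rintro z ⟨hzD, hzc⟩
  exact hcl hzc hzD
end

section
/- Let (a_n)_{n≥0} be complex coefficients with ρ := (limsup_{n→∞} |a_n|^{1/n})^{-1} satisfying 0 < ρ < ∞, and let f_n(z) := Σ_{k=0}^n a_k z^k be the sections of the power series Σ a_n z^n. Then for every z ∈ ℂ such that f_n(z) does not tend to 0 as n → ∞, one has limsup_{n→∞} |f_n(z)|^{1/n} = max(1, |z|/ρ). -/
open Filter Topology

lemma aux_limsup_le {b : ℕ → ℝ} (hb : ∀ n, 0 ≤ b n) {c : ℝ} (hc : 0 ≤ c)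
    (h : ∀ᶠ n in atTop, b n ≤ c ^ n) :
    limsup (fun n : ℕ => b n ^ ((n : ℝ)⁻¹)) atTop ≤ c := by
  apply limsup_le_of_le
  · exact isCoboundedUnder_le_of_eventually_le atTop (x := 0)
      (Eventually.of_forall fun n => Real.rpow_nonneg (hb n) _)
  · filter_upwards [h, eventually_ge_atTop 1] with n hn hn1
    have hne : (n : ℝ) ≠ 0 := Nat.cast_ne_zero.mpr (by omega)
    calc b n ^ ((n : ℝ)⁻¹) ≤ (c ^ n) ^ ((n : ℝ)⁻¹) :=
          Real.rpow_le_rpow (hb n) hn (by positivity)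
      _ = c := by
          rw [← Real.rpow_natCast c n, ← Real.rpow_mul hc, mul_inv_cancel₀ hne, Real.rpow_one]

lemma aux_ev_le {b : ℕ → ℝ} (hb : ∀ n, 0 ≤ b n) {c : ℝ}
    (hbd : IsBoundedUnder (· ≤ ·) atTop (fun n : ℕ => b n ^ ((n : ℝ)⁻¹)))
    (h : limsup (fun n : ℕ => b n ^ ((n : ℝ)⁻¹)) atTop < c) :
    ∀ᶠ n in atTop, b n ≤ c ^ n := by
  filter_upwards [eventually_lt_of_limsup_lt h hbd, eventually_ge_atTop 1] with n hn hn1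
  have hne : (n : ℝ) ≠ 0 := Nat.cast_ne_zero.mpr (by omega)
  have hbn : b n = (b n ^ ((n : ℝ)⁻¹)) ^ n := by
    rw [← Real.rpow_natCast (b n ^ ((n:ℝ)⁻¹)) n, ← Real.rpow_mul (hb n),
      inv_mul_cancel₀ hne, Real.rpow_one]
  rw [hbn]
  exact pow_le_pow_left₀ (Real.rpow_nonneg (hb n) _) hn.le n

/-- growth function of the sections of a power series with radius of convergence
`ρ`, `0 < ρ < ∞`: if `f n z` does not tend to `0`, then
`limsup |f n z|^(1/n) = max 1 (|z|/ρ)`. -/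
theorem stmt_3
    (a : ℕ → ℂ) (ρ : ℝ) (hρ : 0 < ρ)
    (hcc : limsup (fun n : ℕ => ‖a n‖ ^ ((n : ℝ)⁻¹)) atTop = ρ⁻¹)
    (z : ℂ)
    (hz : ¬ Tendsto (fun n : ℕ => ∑ k ∈ Finset.range (n + 1), a k * z ^ k) atTop (𝓝 0)) :
    limsup (fun n : ℕ =>
        ‖∑ k ∈ Finset.range (n + 1), a k * z ^ k‖ ^ ((n : ℝ)⁻¹)) atTop
      = max 1 (‖z‖ / ρ) := by
  set r : ℝ := ‖z‖ with hr_def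
  have hr : 0 ≤ r := norm_nonneg z
  set b : ℕ → ℝ := fun n => ‖∑ k ∈ Finset.range (n + 1), a k * z ^ k‖ with hb_def
  have hb : ∀ n, 0 ≤ b n := fun n => norm_nonneg _
  set L : ℝ := limsup (fun n : ℕ => b n ^ ((n : ℝ)⁻¹)) atTop with hL_def
  -- Step A: boundedness of |a n|^{1/n}
  have hAbdd : IsBoundedUnder (· ≤ ·) atTop
      (fun n : ℕ => ‖a n‖ ^ ((n : ℝ)⁻¹)) := by
    by_contra h
    have hempty : {x : ℝ | ∀ᶠ n : ℕ in atTop, ‖a n‖ ^ ((n : ℝ)⁻¹) ≤ x} = ∅ := by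
      ext x
      simp only [Set.mem_setOf_eq, Set.mem_empty_iff_false, iff_false]
      exact fun hx => h ⟨x, hx⟩
    rw [limsup_eq, hempty, Real.sInf_empty] at hcc
    exact absurd hcc.symm (ne_of_gt (inv_pos.mpr hρ))
  -- Step B: key eventual bound
  have key : ∀ c : ℝ, max 1 (r / ρ) < c → ∀ᶠ n in atTop, b n ≤ c ^ n := by
    intro c hc
    have hc1 : 1 < c := lt_of_le_of_lt (le_max_left _ _) hc
    have hc0 : 0 < c := lt_trans one_pos hc1
    obtain ⟨q, hq1, hq2, hq0⟩ : ∃ q : ℝ, ρ⁻¹ < q ∧ q * r < c ∧ 0 < q := by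
      rcases eq_or_lt_of_le hr with h0 | h0
      · exact ⟨ρ⁻¹ + 1, by linarith [inv_pos.mpr hρ], by rw [← h0]; simpa using hc0,
          by positivity⟩
      · have hcr : ρ⁻¹ < c / r := by
          rw [lt_div_iff₀ h0]
          calc ρ⁻¹ * r = r / ρ := by rw [div_eq_mul_inv, mul_comm]
            _ ≤ max 1 (r / ρ) := le_max_right _ _
            _ < c := hc
        refine ⟨(ρ⁻¹ + c / r) / 2, by linarith, ?_, by positivity⟩
        have : (ρ⁻¹ + c / r) / 2 < c / r := by linarith
        calc (ρ⁻¹ + c / r) / 2 * r < c / r * r := by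
              exact mul_lt_mul_of_pos_right this h0
          _ = c := div_mul_cancel₀ c (ne_of_gt h0)
    have hev : ∀ᶠ k : ℕ in atTop, ‖a k‖ ≤ q ^ k := by
      have h1 : limsup (fun n : ℕ => ‖a n‖ ^ ((n : ℝ)⁻¹)) atTop < q := by
        rw [hcc]; exact hq1
      filter_upwards [eventually_lt_of_limsup_lt h1 hAbdd, eventually_ge_atTop 1] with k hk hk1
      have hne : (k : ℝ) ≠ 0 := Nat.cast_ne_zero.mpr (by omega)
      have : ‖a k‖ = (‖a k‖ ^ ((k : ℝ)⁻¹)) ^ k := by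
        rw [← Real.rpow_natCast (‖a k‖ ^ ((k:ℝ)⁻¹)) k,
          ← Real.rpow_mul (norm_nonneg _), inv_mul_cancel₀ hne, Real.rpow_one]
      rw [this]
      exact pow_le_pow_left₀ (Real.rpow_nonneg (norm_nonneg _) _) hk.le k
    obtain ⟨N, hN⟩ := eventually_atTop.mp hev
    set M : ℝ := max 1 (q * r) with hM_def
    have hM1 : 1 ≤ M := le_max_left _ _
    have hM0 : 0 < M := lt_of_lt_of_le one_pos hM1
    have hMc : M < c := max_lt hc1 hq2
    set C : ℝ := ∑ k ∈ Finset.range N, ‖a k‖ * r ^ k with hC_def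
    have hb_le : ∀ n, N ≤ n → b n ≤ C + (n + 1) * M ^ n := by
      intro n hn
      have h1 : b n ≤ ∑ k ∈ Finset.range (n + 1), ‖a k‖ * r ^ k := by
        refine le_trans (norm_sum_le _ _) (le_of_eq ?_)
        refine Finset.sum_congr rfl fun k _ => ?_
        rw [norm_mul, norm_pow]
      have hsplit : ∑ k ∈ Finset.range (n + 1), ‖a k‖ * r ^ k
          = C + ∑ k ∈ Finset.Ico N (n + 1), ‖a k‖ * r ^ k := by
        rw [hC_def, Finset.range_eq_Ico, Finset.range_eq_Ico]
        exact (Finset.sum_Ico_consecutive (f := fun k => ‖a k‖ * r ^ k) (Nat.zero_le N) (by omega : N ≤ n + 1)).symm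
      have h2 : ∑ k ∈ Finset.Ico N (n + 1), ‖a k‖ * r ^ k
          ≤ ∑ k ∈ Finset.Ico N (n + 1), M ^ n := by
        refine Finset.sum_le_sum fun k hk => ?_
        rcases Finset.mem_Ico.mp hk with ⟨hk1, hk2⟩
        calc ‖a k‖ * r ^ k ≤ q ^ k * r ^ k :=
              mul_le_mul_of_nonneg_right (hN k hk1) (pow_nonneg hr k)
          _ = (q * r) ^ k := (mul_pow q r k).symm
          _ ≤ M ^ k := pow_le_pow_left₀ (by positivity) (le_max_right _ _) k
          _ ≤ M ^ n := pow_le_pow_right₀ hM1 (by omega)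
      have h3 : ∑ k ∈ Finset.Ico N (n + 1), M ^ n ≤ (n + 1 : ℝ) * M ^ n := by
        rw [Finset.sum_const, nsmul_eq_mul]
        refine mul_le_mul_of_nonneg_right ?_ (le_of_lt (pow_pos hM0 n))
        rw [Nat.card_Ico]
        exact_mod_cast Nat.cast_le.mpr (by omega : n + 1 - N ≤ n + 1)
      calc b n ≤ C + ∑ k ∈ Finset.Ico N (n + 1), ‖a k‖ * r ^ k := by
            rw [← hsplit]; exact h1
        _ ≤ C + (n + 1) * M ^ n := by linarith
    -- decay
    have hd1 : Tendsto (fun n : ℕ => C * (c⁻¹) ^ n) atTop (𝓝 0) := by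
      have := (tendsto_pow_atTop_nhds_zero_of_lt_one (by positivity)
        (inv_lt_one_of_one_lt₀ hc1)).const_mul C
      simpa using this
    have hd2 : Tendsto (fun n : ℕ => ((n : ℝ) + 1) * (M / c) ^ n) atTop (𝓝 0) := by
      have hMc' : 0 ≤ M / c := by positivity
      have hMc'' : M / c < 1 := (div_lt_one hc0).mpr hMc
      have := (tendsto_self_mul_const_pow_of_lt_one hMc' hMc'').add
        (tendsto_pow_atTop_nhds_zero_of_lt_one hMc' hMc'')
      simpa [add_mul] using this
    have half : (0:ℝ) < 1/2 := by norm_num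
    filter_upwards [eventually_ge_atTop N, hd1.eventually (gt_mem_nhds half),
      hd2.eventually (gt_mem_nhds half)] with n hn h1 h2
    have hcn : (0:ℝ) < c ^ n := pow_pos hc0 n
    have e1 : C < c ^ n / 2 := by
      have : C * (c⁻¹) ^ n * c ^ n < 1/2 * c ^ n := mul_lt_mul_of_pos_right h1 hcn
      rw [mul_assoc, ← mul_pow, inv_mul_cancel₀ (ne_of_gt hc0), one_pow, mul_one] at this
      linarith
    have e2 : ((n : ℝ) + 1) * M ^ n < c ^ n / 2 := by
      have : ((n:ℝ) + 1) * (M / c) ^ n * c ^ n < 1/2 * c ^ n := mul_lt_mul_of_pos_right h2 hcn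
      rw [mul_assoc, div_pow, div_mul_cancel₀ _ (ne_of_gt hcn)] at this
      linarith
    calc b n ≤ C + (n + 1) * M ^ n := hb_le n hn
      _ ≤ c ^ n := by push_cast; linarith
  -- Step C: boundedness of b^{1/n}
  have hbdd : IsBoundedUnder (· ≤ ·) atTop (fun n : ℕ => b n ^ ((n : ℝ)⁻¹)) := by
    have hc : max 1 (r / ρ) < max 1 (r / ρ) + 1 := by linarith
    have h0 : (0:ℝ) ≤ max 1 (r / ρ) + 1 := by positivity
    refine isBoundedUnder_of_eventually_le (a := max 1 (r / ρ) + 1) ?_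
    filter_upwards [key _ hc, eventually_ge_atTop 1] with n hn hn1
    have hne : (n : ℝ) ≠ 0 := Nat.cast_ne_zero.mpr (by omega)
    calc b n ^ ((n : ℝ)⁻¹) ≤ ((max 1 (r / ρ) + 1) ^ n) ^ ((n : ℝ)⁻¹) :=
          Real.rpow_le_rpow (hb n) hn (by positivity)
      _ = max 1 (r / ρ) + 1 := by
          rw [← Real.rpow_natCast (max 1 (r/ρ) + 1) n, ← Real.rpow_mul h0,
            mul_inv_cancel₀ hne, Real.rpow_one]
  -- Step D: upper bound
  have hupper : L ≤ max 1 (r / ρ) := by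
    refine le_of_forall_gt_imp_ge_of_dense fun c hc => ?_
    have hc0 : (0:ℝ) ≤ c := le_trans (by positivity) hc.le
    exact aux_limsup_le hb hc0 (key c hc)
  -- Step E: L ≥ 1
  have hge1 : 1 ≤ L := by
    by_contra h
    push_neg at h
    set c : ℝ := max ((L + 1) / 2) (1 / 2) with hc_def
    have hc0 : 0 < c := lt_of_lt_of_le (by norm_num) (le_max_right _ _)
    have hcL : L < c := lt_of_lt_of_le (by linarith) (le_max_left _ _)
    have hc1 : c < 1 := max_lt (by linarith) (by norm_num)
    have hev := aux_ev_le hb hbdd hcL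
    have hb0 : Tendsto b atTop (𝓝 0) := by
      refine squeeze_zero' (Eventually.of_forall hb) hev ?_
      exact tendsto_pow_atTop_nhds_zero_of_lt_one hc0.le hc1
    apply hz
    rw [tendsto_zero_iff_norm_tendsto_zero]
    simpa using hb0
  -- Step F: L ≥ r/ρ
  have hgeρ : r / ρ ≤ L := by
    rcases le_or_gt (r / ρ) 1 with h | h
    · exact le_trans h hge1
    · by_contra h2
      push_neg at h2
      have hr0 : 0 < r := by
        by_contra hr0
        push_neg at hr0
        have : r = 0 := le_antisymm hr0 hr
        rw [this, zero_div] at h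
        linarith
      set c : ℝ := (L + r / ρ) / 2 with hc_def
      have hc0 : 0 < c := by
        have : (0:ℝ) < L := lt_of_lt_of_le one_pos hge1
        have : (0:ℝ) < r / ρ := by positivity
        simp only [hc_def]; linarith
      have hcL : L < c := by simp only [hc_def]; linarith
      have hcρ : c < r / ρ := by simp only [hc_def]; linarith
      obtain ⟨N, hN⟩ := eventually_atTop.mp (aux_ev_le hb hbdd hcL)
      set K : ℝ := 1 + c⁻¹ with hK_def
      have hK1 : 1 ≤ K := by
        have : 0 < c⁻¹ := inv_pos.mpr hc0
        simp only [hK_def]; linarith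
      have hK0 : 0 < K := lt_of_lt_of_le one_pos hK1
      have hev2 : ∀ᶠ m : ℕ in atTop, ‖a m‖ ≤ K * (c / r) ^ m := by
        filter_upwards [eventually_ge_atTop (N + 1)] with m hm
        have hm1 : 1 ≤ m := by omega
        have habs : ‖a m‖ * r ^ m ≤ K * c ^ m := by
          have hfd : a m * z ^ m = (∑ k ∈ Finset.range (m + 1), a k * z ^ k)
              - ∑ k ∈ Finset.range ((m - 1) + 1), a k * z ^ k := by
            have : (m - 1) + 1 = m := by omega
            rw [this, Finset.sum_range_succ]
            ring
          have h1 : ‖a m * z ^ m‖ ≤ b m + b (m - 1) := by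
            rw [hfd]
            exact norm_sub_le _ _
          have h2 : b m ≤ c ^ m := hN m (by omega)
          have h3 : b (m - 1) ≤ c ^ (m - 1) := hN (m - 1) (by omega)
          have h4 : c ^ (m - 1) = c⁻¹ * c ^ m := by
            rw [pow_sub₀ c (ne_of_gt hc0) hm1, pow_one, mul_comm]
          calc ‖a m‖ * r ^ m = ‖a m * z ^ m‖ := by
                rw [norm_mul, norm_pow]
            _ ≤ b m + b (m - 1) := h1
            _ ≤ c ^ m + c⁻¹ * c ^ m := by rw [← h4]; linarith
            _ = K * c ^ m := by simp only [hK_def]; ring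
        have hrm : (0:ℝ) < r ^ m := pow_pos hr0 m
        rw [div_pow, ← mul_div_assoc, le_div_iff₀ hrm]
        exact habs
      -- limsup |a|^{1/m} ≤ c / r
      have hle : ρ⁻¹ ≤ c / r := by
        refine le_of_forall_gt_imp_ge_of_dense fun d hd => ?_
        rw [← hcc]
        apply limsup_le_of_le
        · exact isCoboundedUnder_le_of_eventually_le atTop (x := 0)
            (Eventually.of_forall fun n => Real.rpow_nonneg (norm_nonneg _) _)
        · have hKlim : Tendsto (fun m : ℕ => K ^ ((m : ℝ)⁻¹) * (c / r)) atTop (𝓝 (c / r)) := by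
            have h1 : Tendsto (fun m : ℕ => ((m : ℝ))⁻¹) atTop (𝓝 0) :=
              tendsto_inv_atTop_nhds_zero_nat
            have h2 : Tendsto (fun m : ℕ => K ^ ((m : ℝ)⁻¹)) atTop (𝓝 1) := by
              have := (tendsto_const_nhds (x := K) (f := atTop (α := ℕ))).rpow h1
                (Or.inl (ne_of_gt hK0))
              simpa using this
            simpa using h2.mul_const (c / r)
          filter_upwards [hev2, hKlim.eventually_le_const hd, eventually_ge_atTop 1]
            with m hm hm2 hm1
          have hne : (m : ℝ) ≠ 0 := Nat.cast_ne_zero.mpr (by omega)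
          calc ‖a m‖ ^ ((m : ℝ)⁻¹) ≤ (K * (c / r) ^ m) ^ ((m : ℝ)⁻¹) :=
                Real.rpow_le_rpow (norm_nonneg _) hm (by positivity)
            _ = K ^ ((m : ℝ)⁻¹) * (c / r) := by
                rw [Real.mul_rpow hK0.le (by positivity),
                  ← Real.rpow_natCast (c / r) m, ← Real.rpow_mul (by positivity),
                  mul_inv_cancel₀ hne, Real.rpow_one]
            _ ≤ d := hm2
      have : c / r < ρ⁻¹ := by
        rw [div_lt_iff₀ hr0, ← div_eq_inv_mul]
        calc c < r / ρ := hcρ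
          _ = ρ⁻¹ * r := by rw [div_eq_mul_inv, mul_comm]
          _ = r / ρ := by rw [div_eq_mul_inv, mul_comm]
      linarith [lt_of_le_of_lt hle this]
  exact le_antisymm hupper (max_le hge1 hgeρ)
end

section
/- Let λ_0 < λ_1 < ⋯ be reals with λ_n → ∞, let (a_n) be complex coefficients, and suppose σ_c ∈ ℝ is the abscissa of convergence of the general Dirichlet series Σ_{n=0}^∞ a_n e^{−λ_n z}, i.e. the series converges at every z with Re z > σ_c and diverges at every z with Re z < σ_c. Let f_n(z) := Σ_{k=0}^n a_k e^{−λ_k z} be the sections. Then for every z ∈ ℂ such that f_n(z) does not tend to 0 as n → ∞, one has limsup_{n→∞} |f_n(z)|^{1/λ_n} = max(1, e^{σ_c − Re z}). -/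
open Filter Topology

-- Abel summation identity
lemma abel_sum (b c : ℕ → ℂ) (n : ℕ) :
    ∑ k ∈ Finset.range (n+1), b k * c k
      = (∑ k ∈ Finset.range (n+1), b k) * c n
        + ∑ k ∈ Finset.range n, (∑ j ∈ Finset.range (k+1), b j) * (c k - c (k+1)) := by
  induction n with
  | zero => simp
  | succ n ih =>
    rw [Finset.sum_range_succ (f := fun k => b k * c k), ih,
      Finset.sum_range_succ (f := fun k => (∑ j ∈ Finset.range (k+1), b j) * (c k - c (k+1))),
      Finset.sum_range_succ (f := b)]
    rw [Finset.sum_range_succ (f := b) (n := n+1), Finset.sum_range_succ (f := b) (n := n)]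
    ring

-- Bernoulli-type exponential inequality
lemma bern_exp {a b s : ℝ} (ha : 0 < a) (hab : a ≤ b) (hs : 0 ≤ s) :
    a * (1 - Real.exp (-(b*s))) ≤ b * (1 - Real.exp (-(a*s))) := by
  set u := Real.exp (-(a*s)) with hu
  have hu1 : u ≤ 1 := Real.exp_le_one_iff.mpr (by nlinarith)
  have hup : 0 < u := Real.exp_pos _
  have hp : (1:ℝ) ≤ b / a := (one_le_div ha).mpr hab
  have hber : 1 + (b/a) * (u - 1) ≤ (1 + (u - 1)) ^ (b/a : ℝ) := by
    apply one_add_mul_self_le_rpow_one_add (by linarith) hp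
  have hpow : (1 + (u - 1)) ^ (b/a : ℝ) = Real.exp (-(b*s)) := by
    have : (1 + (u - 1)) = u := by ring
    rw [this, hu, ← Real.exp_mul]
    congr 1
    field_simp
  rw [hpow] at hber
  have ha' := ha.le
  have : a * (1 + (b/a) * (u-1)) = a + b*(u-1) := by field_simp
  nlinarith [mul_le_mul_of_nonneg_left hber ha.le]

lemma bound_of_bounded (b : ℕ → ℂ) (c : ℕ → ℝ) (hc0 : ∀ k, 0 ≤ c k) (hc : Monotone c)
    (B : ℝ) (hB : ∀ n, ‖∑ k ∈ Finset.range (n+1), b k‖ ≤ B) (n : ℕ) :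
    ‖∑ k ∈ Finset.range (n+1), b k * (c k : ℂ)‖ ≤ 2 * B * c n := by
  have hB0 : 0 ≤ B := le_trans (norm_nonneg _) (hB 0)
  rw [abel_sum]
  refine le_trans (norm_add_le _ _) ?_
  have h1 : ‖(∑ k ∈ Finset.range (n+1), b k) * (c n : ℂ)‖ ≤ B * c n := by
    rw [norm_mul, Complex.norm_real, Real.norm_eq_abs, abs_of_nonneg (hc0 n)]
    exact mul_le_mul_of_nonneg_right (hB n) (hc0 n)
  have h2 : ‖∑ k ∈ Finset.range n,
      (∑ j ∈ Finset.range (k+1), b j) * ((c k : ℂ) - (c (k+1) : ℂ))‖ ≤ B * c n := by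
    refine le_trans (norm_sum_le _ _) ?_
    have hterm : ∀ k, ‖(∑ j ∈ Finset.range (k+1), b j) * ((c k : ℂ) - (c (k+1) : ℂ))‖
        ≤ B * (c (k+1) - c k) := by
      intro k
      rw [norm_mul, ← Complex.ofReal_sub, Complex.norm_real, Real.norm_eq_abs,
        abs_of_nonpos (by linarith [hc (Nat.le_succ k)])]
      calc ‖∑ j ∈ Finset.range (k+1), b j‖ * -(c k - c (k+1))
          ≤ B * -(c k - c (k+1)) := by
            apply mul_le_mul_of_nonneg_right (hB k) (by linarith [hc (Nat.le_succ k)])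
        _ = B * (c (k+1) - c k) := by ring
    refine le_trans (Finset.sum_le_sum (fun k _ => hterm k)) ?_
    have : ∑ k ∈ Finset.range n, B * (c (k+1) - c k) = B * (c n - c 0) := by
      rw [← Finset.mul_sum, Finset.sum_range_sub (f := c)]
    rw [this]
    have := hc0 0
    nlinarith
  calc _ ≤ B * c n + B * c n := add_le_add h1 h2
    _ = 2 * B * c n := by ring

lemma step_ineq {θ w lam1 lam2 : ℝ} (hθ : 0 < θ) (hw : θ < w) (h12 : lam1 ≤ lam2) :
    (w - θ) * (Real.exp (lam1 * θ) * (Real.exp (-(lam1 * w)) - Real.exp (-(lam2 * w))))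
      ≤ w * (Real.exp (lam1 * (θ - w)) - Real.exp (lam2 * (θ - w))) := by
  have h := bern_exp (a := w - θ) (b := w) (s := lam2 - lam1)
    (by linarith) (by linarith) (by linarith)
  have e1 : Real.exp (lam1 * θ) * (Real.exp (-(lam1 * w)) - Real.exp (-(lam2 * w)))
      = Real.exp (lam1 * (θ - w)) * (1 - Real.exp (-(w * (lam2 - lam1)))) := by
    rw [mul_sub, mul_sub, ← Real.exp_add, ← Real.exp_add, mul_one, ← Real.exp_add]
    congr 2 <;> ring
  have e2 : Real.exp (lam1 * (θ - w)) - Real.exp (lam2 * (θ - w))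
      = Real.exp (lam1 * (θ - w)) * (1 - Real.exp (-((w - θ) * (lam2 - lam1)))) := by
    rw [mul_one_sub, ← Real.exp_add]
    congr 2; ring
  rw [e1, e2]
  have hv : (0:ℝ) < Real.exp (lam1 * (θ - w)) := Real.exp_pos _
  nlinarith [h, hv.le]

lemma conv_of_bound (lam : ℕ → ℝ) (hmono : Monotone lam) (hlam' : Tendsto lam atTop atTop)
    (b : ℕ → ℂ) {θ w : ℝ} (hθ : 0 < θ) (hw : θ < w) (N : ℕ)
    (hbound : ∀ n, N ≤ n → ‖∑ k ∈ Finset.range (n+1), b k‖ ≤ Real.exp (lam n * θ)) :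
    ∃ L : ℂ, Tendsto (fun n => ∑ k ∈ Finset.range (n+1),
        b k * (Real.exp (-(lam k * w)) : ℂ)) atTop (𝓝 L) := by
  set f : ℕ → ℂ := fun n => ∑ k ∈ Finset.range (n+1), b k with hf
  set c : ℕ → ℝ := fun k => Real.exp (-(lam k * w)) with hc
  set v : ℕ → ℝ := fun k => Real.exp (lam k * (θ - w)) with hv
  have hwθ : (0:ℝ) < w - θ := by linarith
  have hcanti : ∀ k, c (k+1) ≤ c k := fun k =>
    Real.exp_le_exp.mpr (by nlinarith [hmono (Nat.le_succ k)])
  have hvanti : ∀ k, v (k+1) ≤ v k := fun k =>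
    Real.exp_le_exp.mpr (by nlinarith [hmono (Nat.le_succ k)])
  have hvpos : ∀ k, 0 ≤ v k := fun k => (Real.exp_pos _).le
  have hsumv : Summable (fun k => v k - v (k+1)) := by
    apply summable_of_sum_range_le (c := v 0) (fun k => by linarith [hvanti k])
    intro n
    rw [Finset.sum_range_sub' (f := v)]
    linarith [hvpos n]
  have hDsum : Summable (fun k => (w/(w-θ)) * (v k - v (k+1))) := hsumv.mul_left _
  have hterm : ∀ k, N ≤ k → ‖f k * ((c k : ℂ) - (c (k+1) : ℂ))‖
      ≤ (w/(w-θ)) * (v k - v (k+1)) := by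
    intro k hk
    rw [norm_mul, ← Complex.ofReal_sub, Complex.norm_real, Real.norm_eq_abs,
      abs_of_nonneg (by linarith [hcanti k])]
    have h1 : ‖f k‖ * (c k - c (k+1)) ≤ Real.exp (lam k * θ) * (c k - c (k+1)) := by
      apply mul_le_mul_of_nonneg_right _ (by linarith [hcanti k])
      simpa using hbound k hk
    refine le_trans h1 ?_
    rw [div_mul_eq_mul_div, le_div_iff₀ hwθ]
    have := step_ineq (lam1 := lam k) (lam2 := lam (k+1)) hθ hw (hmono (Nat.le_succ k))
    simp only [hc, hv]
    nlinarith [this]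
  have hsummable : Summable (fun k => f k * ((c k : ℂ) - (c (k+1) : ℂ))) := by
    rw [← summable_nat_add_iff N]
    apply Summable.of_norm_bounded (g := fun k => (w/(w-θ)) * (v (k+N) - v (k+N+1)))
      ((summable_nat_add_iff N).mpr hDsum)
    intro k
    exact hterm (k+N) (Nat.le_add_left _ _)
  have hS : Tendsto (fun n => ∑ k ∈ Finset.range n, f k * ((c k : ℂ) - (c (k+1) : ℂ)))
      atTop (𝓝 (∑' k, f k * ((c k : ℂ) - (c (k+1) : ℂ)))) :=
    hsummable.hasSum.tendsto_sum_nat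
  have h0 : Tendsto (fun n => f n * (c n : ℂ)) atTop (𝓝 0) := by
    apply squeeze_zero_norm' (a := fun n => Real.exp (lam n * (θ - w)))
    · filter_upwards [eventually_ge_atTop N] with n hn
      rw [norm_mul, Complex.norm_real, Real.norm_eq_abs, abs_of_pos (Real.exp_pos _)]
      calc ‖f n‖ * c n ≤ Real.exp (lam n * θ) * c n := by
            apply mul_le_mul_of_nonneg_right _ (Real.exp_pos _).le
            simpa using hbound n hn
        _ = Real.exp (lam n * (θ - w)) := by
            rw [hc, ← Real.exp_add]; congr 1; ring
    · apply Real.tendsto_exp_atBot.comp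
      exact Tendsto.atTop_mul_const_of_neg (by linarith) hlam'
  refine ⟨0 + ∑' k, f k * ((c k : ℂ) - (c (k+1) : ℂ)), ?_⟩
  exact Tendsto.congr (fun n => (abel_sum b (fun k => (c k : ℂ)) n).symm) (h0.add hS)

/-- growth function of the sections of a general Dirichlet series with abscissa of
convergence `σc`: if `f n z` does not tend to `0`, then
`limsup |f n z|^(1/λ n) = max 1 (exp (σc - Re z))`. -/
theorem stmt_5
    (lam : ℕ → ℝ) (hlam : StrictMono lam) (hlam' : Tendsto lam atTop atTop)
    (a : ℕ → ℂ) (σc : ℝ)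
    (hconv : ∀ z : ℂ, σc < z.re → ∃ L : ℂ,
      Tendsto (fun n : ℕ => ∑ k ∈ Finset.range (n + 1),
        a k * Complex.exp (-(lam k : ℂ) * z)) atTop (𝓝 L))
    (hdiv : ∀ z : ℂ, z.re < σc → ¬ ∃ L : ℂ,
      Tendsto (fun n : ℕ => ∑ k ∈ Finset.range (n + 1),
        a k * Complex.exp (-(lam k : ℂ) * z)) atTop (𝓝 L))
    (z : ℂ)
    (hz : ¬ Tendsto (fun n : ℕ => ∑ k ∈ Finset.range (n + 1),
      a k * Complex.exp (-(lam k : ℂ) * z)) atTop (𝓝 0)) :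
    limsup (fun n : ℕ =>
        ‖∑ k ∈ Finset.range (n + 1),
          a k * Complex.exp (-(lam k : ℂ) * z)‖ ^ (1 / lam n)) atTop
      = max 1 (Real.exp (σc - z.re)) := by
  set f : ℕ → ℂ := fun n => ∑ k ∈ Finset.range (n + 1),
    a k * Complex.exp (-(lam k : ℂ) * z) with hfdef
  set u : ℕ → ℝ := fun n => ‖f n‖ ^ (1 / lam n) with hudef
  set θ0 : ℝ := max 0 (σc - z.re) with hθ0def
  have hmax : max 1 (Real.exp (σc - z.re)) = Real.exp θ0 := by
    rw [hθ0def, Real.exp_monotone.map_max, Real.exp_zero]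
  rw [hmax]
  have hunneg : ∀ n, 0 ≤ u n := fun n => Real.rpow_nonneg (norm_nonneg _) _
  have hucobdd : IsCoboundedUnder (· ≤ ·) atTop u :=
    (isBoundedUnder_of ⟨0, fun n => hunneg n⟩ :
      IsBoundedUnder (· ≥ ·) atTop u).isCoboundedUnder_le
  have hlampos : ∀ᶠ n in atTop, (1:ℝ) ≤ lam n := hlam'.eventually_ge_atTop 1
  -- rpow tendsto helper
  have hrpow1 : ∀ C : ℝ, 0 < C → Tendsto (fun n => C ^ (1 / lam n)) atTop (𝓝 1) := by
    intro C hC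
    have h1 : Tendsto (fun n => Real.log C * (1 / lam n)) atTop (𝓝 0) := by
      have := (tendsto_inv_atTop_zero).comp hlam'
      simpa [one_div, mul_comm] using this.const_mul (Real.log C)
    have h2 := (Real.continuous_exp.tendsto 0).comp h1
    simp only [Function.comp, Real.exp_zero] at h2
    refine h2.congr fun n => ?_
    rw [Real.rpow_def_of_pos hC]
    simp [Function.comp]
  -- STEP A: growth bound from convergence
  have hub : ∀ θ : ℝ, θ0 < θ → ∃ C : ℝ, 0 < C ∧
      ∀ n, ‖f n‖ ≤ C * Real.exp (lam n * θ) := by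
    intro θ hθ
    have hθpos : 0 < θ := lt_of_le_of_lt (le_max_left _ _) hθ
    have hre : σc < (z + (θ:ℂ)).re := by
      simp only [Complex.add_re, Complex.ofReal_re]
      have := lt_of_le_of_lt (le_max_right _ _) hθ
      linarith
    obtain ⟨L, hg⟩ := hconv (z + θ) hre
    set b : ℕ → ℂ := fun k => a k * Complex.exp (-(lam k : ℂ) * (z + θ)) with hbdef
    obtain ⟨B, hB⟩ := hg.norm.bddAbove_range
    have hBb : ∀ n, ‖∑ k ∈ Finset.range (n+1), b k‖ ≤ B + 1 := by
      intro n
      have : ‖∑ k ∈ Finset.range (n+1), b k‖ ≤ B := hB ⟨n, rfl⟩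
      linarith
    have hB1 : (0:ℝ) < B + 1 := by
      have h0 : (0:ℝ) ≤ ‖∑ k ∈ Finset.range (0+1), b k‖ := norm_nonneg _
      have := hB ⟨0, rfl⟩
      linarith
    refine ⟨2 * (B + 1), by linarith, fun n => ?_⟩
    have key := bound_of_bounded b (fun k => Real.exp (lam k * θ))
      (fun k => (Real.exp_pos _).le)
      (fun i j hij => Real.exp_le_exp.mpr
        (mul_le_mul_of_nonneg_right (hlam.monotone hij) hθpos.le))
      (B + 1) hBb n
    have hident : ∀ k, b k * ((Real.exp (lam k * θ) : ℝ) : ℂ)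
        = a k * Complex.exp (-(lam k : ℂ) * z) := by
      intro k
      rw [hbdef]
      simp only [Complex.ofReal_exp, mul_assoc, ← Complex.exp_add]
      congr 2
      push_cast
      ring
    rw [hfdef]
    simp only [← hident]
    exact key
  -- eventual comparison for each θ > θ0
  have hcomp : ∀ θ : ℝ, θ0 < θ → ∃ vlim : ℕ → ℝ,
      Tendsto vlim atTop (𝓝 (Real.exp θ)) ∧ ∀ᶠ n in atTop, u n ≤ vlim n := by
    intro θ hθ
    obtain ⟨C, hC, hCb⟩ := hub θ hθ
    refine ⟨fun n => C ^ (1 / lam n) * Real.exp θ, ?_, ?_⟩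
    · simpa using (hrpow1 C hC).mul_const (Real.exp θ)
    · filter_upwards [hlampos] with n hn
      have hlamn : 0 < lam n := lt_of_lt_of_le one_pos hn
      have h1 : u n ≤ (C * Real.exp (lam n * θ)) ^ (1 / lam n) :=
        Real.rpow_le_rpow (norm_nonneg _) (hCb n) (by positivity)
      refine le_trans h1 ?_
      rw [Real.mul_rpow hC.le (Real.exp_pos _).le, ← Real.exp_mul]
      have he : lam n * θ * (1 / lam n) = θ := by field_simp
      rw [he]
  have hbddu : IsBoundedUnder (· ≤ ·) atTop u := by
    obtain ⟨v, hv, hle⟩ := hcomp (θ0 + 1) (by linarith)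
    exact (hv.isBoundedUnder_le).mono_le hle
  have hlimsup_le_exp : ∀ θ : ℝ, θ0 < θ → limsup u atTop ≤ Real.exp θ := by
    intro θ hθ
    obtain ⟨v, hv, hle⟩ := hcomp θ hθ
    calc limsup u atTop ≤ limsup v atTop :=
          limsup_le_limsup hle hucobdd hv.isBoundedUnder_le
      _ = Real.exp θ := hv.limsup_eq
  have hle : limsup u atTop ≤ Real.exp θ0 := by
    by_contra h
    push_neg at h
    have hpos : 0 < limsup u atTop := lt_trans (Real.exp_pos θ0) h
    have ht : θ0 < Real.log (limsup u atTop) := (Real.lt_log_iff_exp_lt hpos).mpr h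
    set t := Real.log (limsup u atTop) with htdef
    have h2 := hlimsup_le_exp ((θ0 + t)/2) (by linarith)
    have h3 : Real.exp ((θ0 + t)/2) < Real.exp t := Real.exp_lt_exp.mpr (by linarith)
    rw [Real.exp_log hpos] at h3
    linarith
  -- STEP B: limsup ≥ 1
  have hfreq : ∃ ε : ℝ, 0 < ε ∧ ∃ᶠ n in atTop, ε ≤ ‖f n‖ := by
    by_contra h
    push_neg at h
    apply hz
    rw [NormedAddCommGroup.tendsto_nhds_zero]
    intro ε hε
    have h2 := h ε hε
    exact h2.mono fun n hn => by simpa using hn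
  have h1le : 1 ≤ limsup u atTop := by
    obtain ⟨ε, hε, hfr⟩ := hfreq
    have hε' : 0 < min ε 1 := lt_min hε one_pos
    have hfr' : ∃ᶠ n in atTop, min ε 1 ≤ ‖f n‖ :=
      hfr.mono fun n hn => le_trans (min_le_left _ _) hn
    by_contra h
    push_neg at h
    have hls0 : 0 ≤ limsup u atTop :=
      le_limsup_of_frequently_le ((Eventually.of_forall hunneg).frequently) hbddu
    set r := (limsup u atTop + 1)/2 with hrdef
    have hr0 : 0 ≤ r := by rw [hrdef]; linarith
    have hr1 : r < 1 := by rw [hrdef]; linarith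
    have hev : ∀ᶠ n in atTop, r < (min ε 1) ^ (1 / lam n) :=
      (hrpow1 _ hε').eventually_const_lt hr1
    have hfr2 : ∃ᶠ n in atTop, r ≤ u n := by
      refine (hfr'.and_eventually (hev.and hlampos)).mono ?_
      rintro n ⟨hfn, hrn, hln⟩
      have h3 : (min ε 1) ^ (1/lam n) ≤ u n :=
        Real.rpow_le_rpow hε'.le hfn (by positivity)
      linarith
    have := le_limsup_of_frequently_le hfr2 hbddu
    rw [hrdef] at this
    linarith
  -- STEP C: limsup ≥ exp θ0
  have hge : Real.exp θ0 ≤ limsup u atTop := by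
    rcases le_or_gt (σc - z.re) 0 with hcase | hcase
    · rw [hθ0def, max_eq_left hcase, Real.exp_zero]
      exact h1le
    · have hθ0eq : θ0 = σc - z.re := max_eq_right hcase.le
      by_contra h
      push_neg at h
      rw [hθ0eq] at h
      have hlspos : 0 < limsup u atTop := lt_of_lt_of_le one_pos h1le
      have ht0 : 0 ≤ Real.log (limsup u atTop) := Real.log_nonneg h1le
      have ht1 : Real.log (limsup u atTop) < σc - z.re :=
        (Real.log_lt_iff_lt_exp hlspos).mpr h
      set t := Real.log (limsup u atTop) with htdef
      set θ := (t + (σc - z.re))/2 with hθdef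
      have hθt : t < θ := by rw [hθdef]; linarith
      have hθ1 : θ < σc - z.re := by rw [hθdef]; linarith
      have hθpos : 0 < θ := by rw [hθdef]; linarith
      have hlt : limsup u atTop < Real.exp θ := by
        have h4 := Real.exp_lt_exp.mpr hθt
        rwa [Real.exp_log hlspos] at h4
      have hev := eventually_lt_of_limsup_lt hlt hbddu
      obtain ⟨N, hN⟩ := Filter.eventually_atTop.mp (hev.and hlampos)
      have hbnd : ∀ n, N ≤ n → ‖f n‖ ≤ Real.exp (lam n * θ) := by
        intro n hn
        obtain ⟨hu1, hu2⟩ := hN n hn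
        have hlamn : 0 < lam n := lt_of_lt_of_le one_pos hu2
        calc ‖f n‖ = (‖f n‖ ^ (1/lam n)) ^ lam n := by
              rw [← Real.rpow_mul (norm_nonneg _),
                one_div_mul_cancel hlamn.ne', Real.rpow_one]
          _ ≤ (Real.exp θ) ^ lam n := Real.rpow_le_rpow (hunneg n) hu1.le hlamn.le
          _ = Real.exp (lam n * θ) := by rw [← Real.exp_mul, mul_comm]
      set w := (θ + (σc - z.re))/2 with hwdef
      have hw1 : θ < w := by rw [hwdef]; linarith
      have hw2 : w < σc - z.re := by rw [hwdef]; linarith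
      obtain ⟨L, hL⟩ := conv_of_bound lam hlam.monotone hlam'
        (fun k => a k * Complex.exp (-(lam k : ℂ) * z)) hθpos hw1 N hbnd
      refine hdiv (z + (w:ℂ)) ?_ ⟨L, ?_⟩
      · simp only [Complex.add_re, Complex.ofReal_re]
        linarith
      · refine hL.congr fun n => ?_
        refine Finset.sum_congr rfl fun k _ => ?_
        simp only [Complex.ofReal_exp, mul_assoc, ← Complex.exp_add]
        congr 2
        push_cast
        ring
  exact le_antisymm hle hge
end

section
/- Let (a_n)_{n≥0} be complex coefficients such that ρ^{-1} := limsup_{n→∞} (e/(2n)) |a_n|^{1/n} satisfies 0 < ρ^{-1} < ∞, and let f_n(z) := Σ_{k=0}^n a_k J_k(z) be the sections of the Neumann series Σ_{n=0}^∞ a_n J_n(z). Then for every z ∈ ℂ such that f_n(z) does not tend to 0 as n → ∞, one has limsup_{n→∞} |f_n(z)|^{1/n} = max(1, |z|/ρ). -/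
open Filter Topology

set_option maxHeartbeats 1000000

/-- Bessel function of the first kind of integer order `n`, defined by its power series. -/
noncomputable def besselJ (n : ℕ) (z : ℂ) : ℂ :=
  ∑' k : ℕ, ((-1 : ℂ) ^ k / ((k.factorial : ℂ) * ((n + k).factorial : ℂ))) * (z / 2) ^ (n + 2 * k)


lemma fact_lb (n : ℕ) : ((n : ℝ) / Real.exp 1) ^ n ≤ n.factorial := by
  induction n with
  | zero => simp
  | succ n ih =>
    have he : (0:ℝ) < Real.exp 1 := Real.exp_pos 1
    have hn0 : (0:ℝ) ≤ n := Nat.cast_nonneg n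
    have key : ((n:ℝ)+1)^n ≤ Real.exp 1 * (n:ℝ)^n := by
      rcases Nat.eq_zero_or_pos n with h | h
      · subst h; simpa using Real.one_le_exp zero_le_one
      · have hn : (0:ℝ) < n := by exact_mod_cast h
        have h1 : (n:ℝ)+1 ≤ (n:ℝ) * Real.exp ((n:ℝ)⁻¹) := by
          have := Real.add_one_le_exp ((n:ℝ)⁻¹)
          calc (n:ℝ)+1 = (n:ℝ) * ((n:ℝ)⁻¹ + 1) := by field_simp; ring
            _ ≤ (n:ℝ) * Real.exp ((n:ℝ)⁻¹) := by
                exact mul_le_mul_of_nonneg_left this hn0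
        calc ((n:ℝ)+1)^n ≤ ((n:ℝ) * Real.exp ((n:ℝ)⁻¹))^n := by
              apply pow_le_pow_left₀ (by positivity) h1
          _ = (n:ℝ)^n * Real.exp ((n:ℝ)⁻¹) ^ n := mul_pow _ _ _
          _ = (n:ℝ)^n * Real.exp ((n:ℝ)⁻¹ * n) := by
              rw [← Real.exp_nat_mul]; ring_nf
          _ = (n:ℝ)^n * Real.exp 1 := by
              rw [inv_mul_cancel₀ (ne_of_gt hn)]
          _ = Real.exp 1 * (n:ℝ)^n := mul_comm _ _
    have : (((n:ℝ)+1) / Real.exp 1) ^ (n+1) ≤ ((n:ℝ)+1) * ((n:ℝ)/Real.exp 1)^n := by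
      rw [div_pow, div_pow, pow_succ, div_le_iff₀ (by positivity)]
      have h2 : ((n:ℝ)+1)^n * ((n:ℝ)+1) ≤ (Real.exp 1 * (n:ℝ)^n) * ((n:ℝ)+1) :=
        mul_le_mul_of_nonneg_right key (by positivity)
      calc ((n:ℝ)+1)^n * ((n:ℝ)+1) ≤ (Real.exp 1 * (n:ℝ)^n) * ((n:ℝ)+1) := h2
        _ = ((n:ℝ)+1) * ((n:ℝ)^n / Real.exp 1 ^ n) * (Real.exp 1 ^ n * Real.exp 1) := by
            field_simp
    calc (((n+1:ℕ):ℝ) / Real.exp 1) ^ (n+1) = (((n:ℝ)+1) / Real.exp 1) ^ (n+1) := by push_cast; ring_nf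
      _ ≤ ((n:ℝ)+1) * ((n:ℝ)/Real.exp 1)^n := this
      _ ≤ ((n:ℝ)+1) * n.factorial := by
          apply mul_le_mul_of_nonneg_left ih (by positivity)
      _ = ((n+1).factorial : ℝ) := by
          rw [Nat.factorial_succ]; push_cast; ring


lemma fact_ub : ∀ n : ℕ, 1 ≤ n → (n.factorial : ℝ) ≤ Real.exp 1 * n * ((n : ℝ) / Real.exp 1) ^ n := by
  intro n hn
  induction n with
  | zero => omega
  | succ n ih =>
    have he : (0:ℝ) < Real.exp 1 := Real.exp_pos 1
    rcases Nat.eq_zero_or_pos n with h | h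
    · subst h
      have : Real.exp 1 * (1:ℝ) * ((1:ℝ)/Real.exp 1) ^ 1 = 1 := by
        field_simp
      simpa [Nat.factorial] using this.ge
    have hn1 : (0:ℝ) < n := by exact_mod_cast h
    have key : Real.exp 1 ≤ (((n:ℝ)+1)/(n:ℝ)) ^ (n+1) := by
      have h1 : Real.exp (-(((n:ℝ)+1)⁻¹)) ≥ (n:ℝ)/((n:ℝ)+1) := by
        have := Real.add_one_le_exp (-(((n:ℝ)+1)⁻¹))
        calc (n:ℝ)/((n:ℝ)+1) = -(((n:ℝ)+1)⁻¹) + 1 := by field_simp; ring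
          _ ≤ _ := this
      have h2 : Real.exp (((n:ℝ)+1)⁻¹) ≤ ((n:ℝ)+1)/(n:ℝ) := by
        rw [Real.exp_neg, ge_iff_le, ← inv_inv ((n:ℝ)/((n:ℝ)+1))] at h1
        have h3 := inv_anti₀ (by positivity) h1
        rw [inv_inv, inv_inv, inv_div] at h3
        exact h3
      calc Real.exp 1 = Real.exp (((n:ℝ)+1)⁻¹) ^ (n+1) := by
            rw [← Real.exp_nat_mul]
            congr 1
            push_cast
            field_simp
        _ ≤ (((n:ℝ)+1)/(n:ℝ)) ^ (n+1) := by
            apply pow_le_pow_left₀ (le_of_lt (Real.exp_pos _)) h2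
    have step : (n:ℝ) * ((n:ℝ)/Real.exp 1)^n ≤ (((n:ℝ)+1)/Real.exp 1)^(n+1) := by
      rw [div_pow, div_pow, le_div_iff₀ (by positivity)]
      rw [div_pow] at key
      have := mul_le_mul_of_nonneg_left key (by positivity : (0:ℝ) ≤ (n:ℝ) * (n:ℝ)^n / Real.exp 1^n * Real.exp 1^n)
      calc (n:ℝ) * ((n:ℝ)^n/Real.exp 1^n) * Real.exp 1^(n+1)
          = ((n:ℝ) * (n:ℝ)^n / Real.exp 1^n * Real.exp 1^n) * Real.exp 1 := by
            rw [pow_succ]; field_simp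
        _ ≤ ((n:ℝ) * (n:ℝ)^n / Real.exp 1^n * Real.exp 1^n) * ((((n:ℝ)+1)^(n+1))/((n:ℝ)^(n+1))) := this
        _ = ((n:ℝ)+1)^(n+1) * ((n:ℝ)^(n+1)/((n:ℝ)^(n+1))) := by field_simp; ring
        _ = ((n:ℝ)+1)^(n+1) := by rw [div_self (by positivity), mul_one]
    have ihn := ih h
    calc ((n+1).factorial : ℝ) = ((n:ℝ)+1) * n.factorial := by
          rw [Nat.factorial_succ]; push_cast; ring
      _ ≤ ((n:ℝ)+1) * (Real.exp 1 * n * ((n : ℝ) / Real.exp 1) ^ n) :=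
          mul_le_mul_of_nonneg_left ihn (by positivity)
      _ = Real.exp 1 * ((n:ℝ)+1) * ((n:ℝ) * ((n : ℝ) / Real.exp 1) ^ n) := by ring
      _ ≤ Real.exp 1 * ((n:ℝ)+1) * ((((n:ℝ)+1)/Real.exp 1)^(n+1)) :=
          mul_le_mul_of_nonneg_left step (by positivity)
      _ = Real.exp 1 * ((n+1:ℕ):ℝ) * (((n+1:ℕ):ℝ) / Real.exp 1) ^ (n+1) := by push_cast; ring


lemma tendsto_nat_rpow_inv : Tendsto (fun n : ℕ => (n:ℝ) ^ ((n:ℝ)⁻¹)) atTop (𝓝 1) := by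
  have h := tendsto_rpow_div.comp (tendsto_natCast_atTop_atTop (R := ℝ) : Tendsto (Nat.cast : ℕ → ℝ) atTop atTop)
  simpa [one_div, Function.comp_def] using h

lemma tendsto_const_rpow_inv (c : ℝ) (hc : 0 < c) :
    Tendsto (fun n : ℕ => c ^ ((n:ℝ)⁻¹)) atTop (𝓝 1) := by
  have h1 : Tendsto (fun n : ℕ => ((n:ℝ))⁻¹) atTop (𝓝 0) :=
    tendsto_inv_atTop_zero.comp tendsto_natCast_atTop_atTop
  have h2 : Tendsto (fun n : ℕ => Real.exp (Real.log c * (n:ℝ)⁻¹)) atTop (𝓝 1) := by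
    have h3 : Tendsto (fun n : ℕ => Real.log c * (n:ℝ)⁻¹) atTop (𝓝 0) := by
      simpa using h1.const_mul (Real.log c)
    simpa [Function.comp_def] using (Real.continuous_exp.continuousAt.tendsto.comp h3)
  refine h2.congr (fun n => ?_)
  rw [← Real.rpow_def_of_pos hc]

/-- e/n * (n!)^(1/n) → 1 -/
lemma tendsto_fact_root :
    Tendsto (fun n : ℕ => Real.exp 1 / (n:ℝ) * ((n.factorial : ℝ)) ^ ((n:ℝ)⁻¹)) atTop (𝓝 1) := by
  have he : (0:ℝ) < Real.exp 1 := Real.exp_pos 1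
  have hupper : Tendsto (fun n : ℕ => (Real.exp 1 * (n:ℝ)) ^ ((n:ℝ)⁻¹)) atTop (𝓝 1) := by
    have : ∀ᶠ n : ℕ in atTop, (Real.exp 1 * (n:ℝ)) ^ ((n:ℝ)⁻¹)
        = Real.exp 1 ^ ((n:ℝ)⁻¹) * (n:ℝ) ^ ((n:ℝ)⁻¹) := by
      filter_upwards [eventually_ge_atTop 1] with n hn
      exact Real.mul_rpow (le_of_lt he) (Nat.cast_nonneg n)
    have h2 := (tendsto_const_rpow_inv (Real.exp 1) he).mul tendsto_nat_rpow_inv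
    rw [mul_one] at h2
    exact h2.congr' (this.mono fun n h => h.symm)
  apply tendsto_of_tendsto_of_tendsto_of_le_of_le' tendsto_const_nhds hupper
  · filter_upwards [eventually_ge_atTop 1] with n hn
    have hn0 : (n:ℝ) ≠ 0 := by positivity
    have h1 : ((n:ℝ)/Real.exp 1) ≤ ((n.factorial:ℝ)) ^ ((n:ℝ)⁻¹) := by
      have := Real.rpow_le_rpow (by positivity) (fact_lb n) (by positivity : (0:ℝ) ≤ (n:ℝ)⁻¹)
      rwa [Real.pow_rpow_inv_natCast (by positivity) (by omega)] at this
    calc (1:ℝ) = Real.exp 1 / (n:ℝ) * ((n:ℝ)/Real.exp 1) := by field_simp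
      _ ≤ _ := by
        apply mul_le_mul_of_nonneg_left h1 (by positivity)
  · filter_upwards [eventually_ge_atTop 1] with n hn
    have hn0 : (n:ℝ) ≠ 0 := by positivity
    have hn1 : (1:ℝ) ≤ (n:ℝ) := by exact_mod_cast hn
    have h1 : ((n.factorial:ℝ)) ^ ((n:ℝ)⁻¹) ≤ (Real.exp 1 * (n:ℝ)) ^ ((n:ℝ)⁻¹) * ((n:ℝ)/Real.exp 1) := by
      have h2 := Real.rpow_le_rpow (by positivity) (fact_ub n hn) (by positivity : (0:ℝ) ≤ (n:ℝ)⁻¹)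
      rwa [Real.mul_rpow (by positivity) (by positivity),
        Real.pow_rpow_inv_natCast (by positivity) (by omega)] at h2
    calc Real.exp 1 / (n:ℝ) * ((n.factorial:ℝ)) ^ ((n:ℝ)⁻¹)
        ≤ Real.exp 1 / (n:ℝ) * ((Real.exp 1 * (n:ℝ)) ^ ((n:ℝ)⁻¹) * ((n:ℝ)/Real.exp 1)) :=
          mul_le_mul_of_nonneg_left h1 (by positivity)
      _ = (Real.exp 1 * (n:ℝ)) ^ ((n:ℝ)⁻¹) := by field_simp



lemma bJ_term_abs (n k : ℕ) (z : ℂ) :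
    ‖((-1 : ℂ) ^ k / ((k.factorial : ℂ) * ((n + k).factorial : ℂ))) * (z / 2) ^ (n + 2 * k)‖
      = (‖z‖ / 2) ^ (n + 2 * k) / ((k.factorial : ℝ) * ((n + k).factorial : ℝ)) := by
  rw [norm_mul, norm_div, norm_mul, norm_pow, norm_pow, norm_div]
  simp [Complex.norm_natCast]
  ring

lemma bJ_term_abs_le (n k : ℕ) (z : ℂ) :
    (‖z‖ / 2) ^ (n + 2 * k) / ((k.factorial : ℝ) * ((n + k).factorial : ℝ))
      ≤ (‖z‖ / 2) ^ n / (n.factorial : ℝ) * (((‖z‖) ^ 2 / 4) ^ k / (k.factorial : ℝ)) := by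
  have h1 : (‖z‖ / 2) ^ (n + 2 * k) = (‖z‖ / 2) ^ n * ((‖z‖)^2/4) ^ k := by
    rw [pow_add, pow_mul]
    congr 2
    rw [div_pow]; norm_num
  rw [h1]
  rw [div_le_iff₀ (by positivity), mul_comm ((k.factorial : ℝ)) _]
  have h2 : (n.factorial : ℝ) ≤ ((n+k).factorial : ℝ) := by
    exact_mod_cast Nat.factorial_le (Nat.le_add_right n k)
  calc (‖z‖ / 2) ^ n * ((‖z‖)^2/4) ^ k
      = ((‖z‖ / 2) ^ n / (n.factorial : ℝ) * (((‖z‖)^2/4) ^ k / (k.factorial : ℝ))) * ((n.factorial:ℝ) * (k.factorial:ℝ)) := by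
        field_simp
    _ ≤ _ := by
        apply mul_le_mul_of_nonneg_left _ (by positivity)
        exact mul_le_mul_of_nonneg_right h2 (by positivity)

lemma bJ_summable_norm (n : ℕ) (z : ℂ) :
    Summable (fun k : ℕ => ‖
      ((-1 : ℂ) ^ k / ((k.factorial : ℂ) * ((n + k).factorial : ℂ))) * (z / 2) ^ (n + 2 * k)‖) := by
  apply Summable.of_nonneg_of_le (fun k => norm_nonneg _)
    (fun k => le_of_eq_of_le (bJ_term_abs n k z) (bJ_term_abs_le n k z))
  exact (Real.summable_pow_div_factorial ((‖z‖)^2/4)).mul_left _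

lemma bJ_summable (n : ℕ) (z : ℂ) :
    Summable (fun k : ℕ =>
      ((-1 : ℂ) ^ k / ((k.factorial : ℂ) * ((n + k).factorial : ℂ))) * (z / 2) ^ (n + 2 * k)) :=
  Summable.of_norm (bJ_summable_norm n z)

lemma exp_tail_bound (x : ℝ) (hx : 0 ≤ x) :
    ∑' k : ℕ, x ^ (k+1) / ((k+1).factorial : ℝ) ≤ Real.exp x := by
  have hs : Summable (fun k : ℕ => x ^ (k+1) / ((k+1).factorial : ℝ)) :=
    (Real.summable_pow_div_factorial x).comp_injective (add_left_injective 1)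
  apply hs.tsum_le_of_sum_le
  intro s
  obtain ⟨m, hm⟩ := s.exists_le
  calc ∑ k ∈ s, x ^ (k+1) / ((k+1).factorial : ℝ)
      ≤ ∑ k ∈ Finset.range (m+1), x ^ (k+1) / ((k+1).factorial : ℝ) := by
        apply Finset.sum_le_sum_of_subset_of_nonneg
        · intro k hk; exact Finset.mem_range.mpr (by have := hm k hk; omega)
        · intro k _ _; positivity
    _ ≤ ∑ i ∈ Finset.range (m+2), x ^ i / (i.factorial : ℝ) := by
        rw [Finset.sum_range_succ' (fun i => x ^ i / (i.factorial : ℝ)) (m+1)]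
        simp only [pow_zero, Nat.factorial_zero, Nat.cast_one]
        norm_num
    _ ≤ Real.exp x := Real.sum_le_exp_of_nonneg hx _

lemma besselJ_est (n : ℕ) (z : ℂ) :
    ‖besselJ n z - (z/2)^n / (n.factorial : ℂ)‖
      ≤ (‖z‖ / 2) ^ n / (n.factorial : ℝ) * (Real.exp ((‖z‖)^2/4) / (n+1)) := by
  set g : ℕ → ℂ := fun k =>
    ((-1 : ℂ) ^ k / ((k.factorial : ℂ) * ((n + k).factorial : ℂ))) * (z / 2) ^ (n + 2 * k) with hg
  have hsum := bJ_summable n z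
  have h0 : g 0 = (z/2)^n / (n.factorial : ℂ) := by
    simp [hg]
    ring
  have hsplit : besselJ n z = g 0 + ∑' k, g (k+1) := by
    rw [besselJ]; exact hsum.tsum_eq_zero_add
  have hshift_norm : Summable (fun k : ℕ => ‖g (k+1)‖) :=
    (bJ_summable_norm n z).comp_injective (add_left_injective 1)
  have key : ‖∑' k, g (k+1)‖ ≤
      (‖z‖ / 2) ^ n / (n.factorial : ℝ) * (Real.exp ((‖z‖)^2/4) / (n+1)) := by
    have h1 : ‖∑' k, g (k+1)‖ ≤ ∑' k, ‖g (k+1)‖ :=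
      norm_tsum_le_tsum_norm hshift_norm
    have h2 : ∀ k : ℕ, ‖g (k+1)‖ ≤
        (‖z‖ / 2) ^ n / ((n.factorial : ℝ) * (n+1)) *
          (((‖z‖)^2/4) ^ (k+1) / ((k+1).factorial : ℝ)) := by
      intro k
      rw [hg]
      show ‖_‖ ≤ _
      rw [bJ_term_abs]
      have hpow : (‖z‖ / 2) ^ (n + 2 * (k+1))
          = (‖z‖ / 2) ^ n * ((‖z‖)^2/4) ^ (k+1) := by
        rw [pow_add, pow_mul]
        congr 2
        rw [div_pow]; norm_num
      rw [hpow]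
      have hfac : (n.factorial : ℝ) * (n+1) ≤ ((n + (k+1)).factorial : ℝ) := by
        have : (n+1).factorial ≤ (n + (k+1)).factorial := Nat.factorial_le (by omega)
        calc (n.factorial : ℝ) * (n+1) = ((n+1).factorial : ℝ) := by
              rw [Nat.factorial_succ]; push_cast; ring
          _ ≤ _ := by exact_mod_cast this
      rw [div_le_iff₀ (by positivity)]
      calc (‖z‖ / 2) ^ n * ((‖z‖)^2/4) ^ (k+1)
          = ((‖z‖ / 2) ^ n / ((n.factorial : ℝ) * (n+1)) *
              (((‖z‖)^2/4) ^ (k+1) / ((k+1).factorial : ℝ))) *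
              (((k+1).factorial : ℝ) * ((n.factorial:ℝ) * (n+1))) := by
            field_simp
        _ ≤ _ := by
            apply mul_le_mul_of_nonneg_left _ (by positivity)
            exact mul_le_mul_of_nonneg_left hfac (by positivity)
    have hbsum : Summable (fun k : ℕ =>
        (‖z‖ / 2) ^ n / ((n.factorial : ℝ) * (n+1)) *
          (((‖z‖)^2/4) ^ (k+1) / ((k+1).factorial : ℝ))) := by
      apply Summable.mul_left
      exact (Real.summable_pow_div_factorial ((‖z‖)^2/4)).comp_injective
        (add_left_injective 1)
    calc ‖∑' k, g (k+1)‖ ≤ ∑' k, ‖g (k+1)‖ := h1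
      _ ≤ ∑' k, ((‖z‖ / 2) ^ n / ((n.factorial : ℝ) * (n+1)) *
            (((‖z‖)^2/4) ^ (k+1) / ((k+1).factorial : ℝ))) :=
          by exact Summable.tsum_le_tsum (f := fun k : ℕ => ‖g (k+1)‖) (g := fun k : ℕ => (‖z‖ / 2) ^ n / ((n.factorial : ℝ) * (n+1)) * (((‖z‖)^2/4) ^ (k+1) / ((k+1).factorial : ℝ))) h2 hshift_norm hbsum
      _ = (‖z‖ / 2) ^ n / ((n.factorial : ℝ) * (n+1)) *
            ∑' k, (((‖z‖)^2/4) ^ (k+1) / ((k+1).factorial : ℝ)) := tsum_mul_left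
      _ ≤ (‖z‖ / 2) ^ n / ((n.factorial : ℝ) * (n+1)) * Real.exp ((‖z‖)^2/4) := by
          apply mul_le_mul_of_nonneg_left (exp_tail_bound _ (by positivity)) (by positivity)
      _ = (‖z‖ / 2) ^ n / (n.factorial : ℝ) * (Real.exp ((‖z‖)^2/4) / (n+1)) := by
          rw [div_mul_eq_mul_div, div_mul_div_comm]
  calc ‖besselJ n z - (z/2)^n / (n.factorial : ℂ)‖
      = ‖∑' k, g (k+1)‖ := by rw [hsplit, ← h0, add_sub_cancel_left]
    _ ≤ _ := key


lemma besselJ_zero (n : ℕ) (hn : 1 ≤ n) : besselJ n 0 = 0 := by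
  rw [besselJ]
  convert tsum_zero with k
  rw [zero_div, zero_pow (by omega), mul_zero]

lemma tendsto_bessel_root (z : ℂ) :
    Tendsto (fun n : ℕ => 2 * (n:ℝ) / Real.exp 1 * (‖besselJ n z‖) ^ ((n:ℝ)⁻¹))
      atTop (𝓝 (‖z‖)) := by
  rcases eq_or_ne z 0 with rfl | hz
  · simp only [norm_zero]
    apply Tendsto.congr' _ tendsto_const_nhds
    filter_upwards [eventually_ge_atTop 1] with n hn
    rw [besselJ_zero n hn, norm_zero, Real.zero_rpow (by positivity), mul_zero]
  · have hz0 : 0 < ‖z‖ := by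
      simpa using norm_pos_iff.mpr hz
    set c := Real.exp ((‖z‖)^2/4) with hc
    have hcpos : 0 < c := Real.exp_pos _
    set A : ℕ → ℝ := fun n => (‖z‖ / 2) ^ n / (n.factorial : ℝ) with hA
    have hApos : ∀ n, 0 < A n := fun n => by positivity
    -- sandwich eventually
    have hsand : ∀ᶠ n : ℕ in atTop, A n / 2 ≤ ‖besselJ n z‖
        ∧ ‖besselJ n z‖ ≤ 3/2 * A n := by
      have hN : ∀ᶠ n : ℕ in atTop, c / ((n:ℝ)+1) ≤ 1/2 := by
        have : Tendsto (fun n : ℕ => c / ((n:ℝ)+1)) atTop (𝓝 0) := by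
          apply Tendsto.div_atTop tendsto_const_nhds
          exact tendsto_atTop_add_const_right _ _ tendsto_natCast_atTop_atTop
        exact this.eventually_le_const (by norm_num)
      filter_upwards [hN] with n hn
      have hest := besselJ_est n z
      have habs : ‖(z/2)^n / (n.factorial : ℂ)‖ = A n := by
        rw [norm_div, norm_pow, norm_div]
        simp [Complex.norm_natCast]
        rfl
      have htail : ‖besselJ n z - (z/2)^n / (n.factorial : ℂ)‖ ≤ A n / 2 := by
        calc ‖besselJ n z - (z/2)^n / (n.factorial : ℂ)‖
            ≤ A n * (c / ((n:ℝ)+1)) := hest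
          _ ≤ A n * (1/2) := mul_le_mul_of_nonneg_left hn (le_of_lt (hApos n))
          _ = A n / 2 := by ring
      constructor
      · have h1 : A n - A n / 2 ≤ ‖besselJ n z‖ := by
          have h2 : ‖(z/2)^n / (n.factorial : ℂ)‖ - ‖besselJ n z‖
              ≤ A n / 2 := by
            calc _ ≤ ‖(z/2)^n / (n.factorial : ℂ) - besselJ n z‖ := by
                  exact norm_sub_norm_le ((z/2)^n / (n.factorial : ℂ)) (besselJ n z)
              _ = ‖besselJ n z - (z/2)^n / (n.factorial : ℂ)‖ :=
                  norm_sub_rev _ _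
              _ ≤ A n / 2 := htail
          rw [habs] at h2
          linarith
        linarith
      · calc ‖besselJ n z‖
            ≤ ‖(z/2)^n / (n.factorial : ℂ)‖
              + ‖besselJ n z - (z/2)^n / (n.factorial : ℂ)‖ := by
              have := norm_add_le ((z/2)^n / (n.factorial : ℂ))
                (besselJ n z - (z/2)^n / (n.factorial : ℂ))
              simpa using this
          _ ≤ A n + A n / 2 := add_le_add (le_of_eq habs) htail
          _ = 3/2 * A n := by ring
    -- the comparison functions
    set D : ℕ → ℝ := fun n => Real.exp 1 / (n:ℝ) * ((n.factorial : ℝ)) ^ ((n:ℝ)⁻¹) with hD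
    have hDlim : Tendsto D atTop (𝓝 1) := tendsto_fact_root
    have hzD : Tendsto (fun n => ‖z‖ / D n) atTop (𝓝 (‖z‖)) := by
      have := Tendsto.div (tendsto_const_nhds (x := ‖z‖)) hDlim one_ne_zero
      simpa [Pi.div_def] using this
    have hL : Tendsto (fun n : ℕ => ((1:ℝ)/2) ^ ((n:ℝ)⁻¹) * (‖z‖ / D n)) atTop
        (𝓝 (‖z‖)) := by
      have := (tendsto_const_rpow_inv (1/2) (by norm_num)).mul hzD
      simpa using this
    have hU : Tendsto (fun n : ℕ => ((3:ℝ)/2) ^ ((n:ℝ)⁻¹) * (‖z‖ / D n)) atTop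
        (𝓝 (‖z‖)) := by
      have := (tendsto_const_rpow_inv (3/2) (by norm_num)).mul hzD
      simpa using this
    -- key identity : 2n/e * (t * A n)^(1/n) = t^(1/n) * (|z| / D n) for n ≥ 1, t ≥ 0
    have hkey : ∀ n : ℕ, 1 ≤ n → ∀ t : ℝ, 0 ≤ t →
        2 * (n:ℝ) / Real.exp 1 * (t * A n) ^ ((n:ℝ)⁻¹)
          = t ^ ((n:ℝ)⁻¹) * (‖z‖ / D n) := by
      intro n hn t ht
      have hnpos : (0:ℝ) < n := by exact_mod_cast hn
      have hfpos : (0:ℝ) < (n.factorial : ℝ) := by positivity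
      have hAr : (A n) ^ ((n:ℝ)⁻¹)
          = (‖z‖ / 2) / ((n.factorial : ℝ)) ^ ((n:ℝ)⁻¹) := by
        rw [hA]
        rw [Real.div_rpow (by positivity) (le_of_lt hfpos)]
        rw [Real.pow_rpow_inv_natCast (by positivity) (by omega)]
      rw [Real.mul_rpow ht (le_of_lt (hApos n)), hAr, hD]
      have hfr : (0:ℝ) < ((n.factorial : ℝ)) ^ ((n:ℝ)⁻¹) := Real.rpow_pos_of_pos hfpos _
      field_simp
    -- conclude by squeeze
    apply tendsto_of_tendsto_of_tendsto_of_le_of_le' hL hU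
    · filter_upwards [hsand, eventually_ge_atTop 1] with n hs hn
      have h1 : A n / 2 = (1/2) * A n := by ring
      calc ((1:ℝ)/2) ^ ((n:ℝ)⁻¹) * (‖z‖ / D n)
          = 2 * (n:ℝ) / Real.exp 1 * ((1/2) * A n) ^ ((n:ℝ)⁻¹) :=
            (hkey n hn (1/2) (by norm_num)).symm
        _ ≤ 2 * (n:ℝ) / Real.exp 1 * (‖besselJ n z‖) ^ ((n:ℝ)⁻¹) := by
            apply mul_le_mul_of_nonneg_left _ (by positivity)
            apply Real.rpow_le_rpow (by positivity) _ (by positivity)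
            rw [← h1]; exact hs.1
    · filter_upwards [hsand, eventually_ge_atTop 1] with n hs hn
      calc 2 * (n:ℝ) / Real.exp 1 * (‖besselJ n z‖) ^ ((n:ℝ)⁻¹)
          ≤ 2 * (n:ℝ) / Real.exp 1 * ((3/2) * A n) ^ ((n:ℝ)⁻¹) := by
            apply mul_le_mul_of_nonneg_left _ (by positivity)
            apply Real.rpow_le_rpow (norm_nonneg _) hs.2 (by positivity)
        _ = ((3:ℝ)/2) ^ ((n:ℝ)⁻¹) * (‖z‖ / D n) := hkey n hn (3/2) (by norm_num)

lemma tendsto_poly_root (C : ℝ) (hC : 0 ≤ C) :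
    Tendsto (fun n : ℕ => (C + (n:ℝ) + 1) ^ ((n:ℝ)⁻¹)) atTop (𝓝 1) := by
  have hup : Tendsto (fun n : ℕ => (C+2) ^ ((n:ℝ)⁻¹) * ((n:ℝ)) ^ ((n:ℝ)⁻¹)) atTop (𝓝 1) := by
    have := (tendsto_const_rpow_inv (C+2) (by linarith)).mul tendsto_nat_rpow_inv
    simpa using this
  apply tendsto_of_tendsto_of_tendsto_of_le_of_le' tendsto_const_nhds hup
  · filter_upwards [eventually_ge_atTop 1] with n hn
    calc (1:ℝ) = 1 ^ ((n:ℝ)⁻¹) := (Real.one_rpow _).symm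
      _ ≤ (C + (n:ℝ) + 1) ^ ((n:ℝ)⁻¹) := by
          apply Real.rpow_le_rpow (by norm_num) _ (by positivity)
          have : (1:ℝ) ≤ (n:ℝ) := by exact_mod_cast hn
          linarith
  · filter_upwards [eventually_ge_atTop 1] with n hn
    have h1 : (1:ℝ) ≤ (n:ℝ) := by exact_mod_cast hn
    have h2 : C + (n:ℝ) + 1 ≤ (C+2) * (n:ℝ) := by nlinarith
    calc (C + (n:ℝ) + 1) ^ ((n:ℝ)⁻¹) ≤ ((C+2) * (n:ℝ)) ^ ((n:ℝ)⁻¹) :=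
          Real.rpow_le_rpow (by linarith) h2 (by positivity)
      _ = (C+2) ^ ((n:ℝ)⁻¹) * ((n:ℝ)) ^ ((n:ℝ)⁻¹) :=
          Real.mul_rpow (by linarith) (by positivity)

lemma root_le_of_le {x q : ℝ} (hx : 0 ≤ x) {n : ℕ} (hn : n ≠ 0)
    (h : x ^ ((n:ℝ)⁻¹) ≤ q) : x ≤ q ^ n := by
  calc x = (x ^ ((n:ℝ)⁻¹)) ^ n := (Real.rpow_inv_natCast_pow hx hn).symm
    _ ≤ q ^ n := pow_le_pow_left₀ (Real.rpow_nonneg hx _) h n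

lemma partial_root_le (t : ℕ → ℂ) (q δ : ℝ) (hq : 1 ≤ q) (hδ : 0 < δ)
    (hw : ∀ᶠ n : ℕ in atTop, ‖t n‖ ≤ q ^ n) :
    ∀ᶠ n : ℕ in atTop,
      ‖∑ k ∈ Finset.range (n+1), t k‖ ^ ((n:ℝ)⁻¹) ≤ q + δ := by
  have hq0 : 0 < q := by linarith
  obtain ⟨N, hN⟩ := eventually_atTop.1 hw
  set C : ℝ := ∑ k ∈ Finset.range N, ‖t k‖ with hC
  have hC0 : 0 ≤ C := Finset.sum_nonneg fun k _ => norm_nonneg _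
  have hFb : ∀ n, N ≤ n → ‖∑ k ∈ Finset.range (n+1), t k‖
      ≤ (C + (n:ℝ) + 1) * q ^ n := by
    intro n hn
    have hsplit : Finset.range (n+1) = Finset.range N ∪ Finset.Ico N (n+1) := by
      rw [Finset.range_eq_Ico, Finset.range_eq_Ico]
      exact (Finset.Ico_union_Ico_eq_Ico (Nat.zero_le N) (by omega : N ≤ n+1)).symm
    calc ‖∑ k ∈ Finset.range (n+1), t k‖
        ≤ ∑ k ∈ Finset.range (n+1), ‖t k‖ :=
          norm_sum_le (Finset.range (n+1)) t
      _ = C + ∑ k ∈ Finset.Ico N (n+1), ‖t k‖ := by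
          rw [hsplit, Finset.sum_union]
          exact Finset.range_eq_Ico N ▸ Finset.Ico_disjoint_Ico_consecutive 0 N (n+1)
      _ ≤ C + ∑ k ∈ Finset.Ico N (n+1), q ^ n := by
          apply add_le_add_right
          apply Finset.sum_le_sum
          intro k hk
          rw [Finset.mem_Ico] at hk
          exact (hN k hk.1).trans (pow_le_pow_right₀ hq (by omega))
      _ ≤ C + ((n:ℝ) + 1) * q ^ n := by
          rw [Finset.sum_const, nsmul_eq_mul]
          apply add_le_add_right
          apply mul_le_mul_of_nonneg_right _ (le_of_lt (pow_pos hq0 n))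
          have hcard : (Finset.Ico N (n+1)).card ≤ n + 1 := by
            rw [Nat.card_Ico]; omega
          exact_mod_cast Nat.cast_le.mpr hcard
      _ ≤ (C + (n:ℝ) + 1) * q ^ n := by
          have h1 : (1:ℝ) ≤ q ^ n := one_le_pow₀ hq
          nlinarith
  have hpoly : ∀ᶠ n : ℕ in atTop, (C + (n:ℝ) + 1) ^ ((n:ℝ)⁻¹) ≤ 1 + δ / q := by
    apply (tendsto_poly_root C hC0).eventually_le_const
    have : 0 < δ / q := by positivity
    linarith
  filter_upwards [eventually_ge_atTop (max N 1), hpoly] with n hn hp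
  have hn1 : 1 ≤ n := le_trans (le_max_right N 1) hn
  have hnN : N ≤ n := le_trans (le_max_left N 1) hn
  calc ‖∑ k ∈ Finset.range (n+1), t k‖ ^ ((n:ℝ)⁻¹)
      ≤ ((C + (n:ℝ) + 1) * q ^ n) ^ ((n:ℝ)⁻¹) :=
        Real.rpow_le_rpow (norm_nonneg _) (hFb n hnN) (by positivity)
    _ = (C + (n:ℝ) + 1) ^ ((n:ℝ)⁻¹) * (q ^ n) ^ ((n:ℝ)⁻¹) :=
        Real.mul_rpow (by positivity) (by positivity)
    _ = (C + (n:ℝ) + 1) ^ ((n:ℝ)⁻¹) * q := by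
        rw [Real.pow_rpow_inv_natCast (le_of_lt hq0) (by omega)]
    _ ≤ (1 + δ / q) * q := by
        apply mul_le_mul_of_nonneg_right hp (le_of_lt hq0)
    _ = q + δ := by field_simp


/-- growth function of the sections of a Neumann series with convergence level
`ρ`, `0 < ρ⁻¹ < ∞`: if `f n z` does not tend to `0`, then
`limsup |f n z|^(1/n) = max 1 (|z|/ρ)`. -/
theorem stmt_8
    (a : ℕ → ℂ) (ρ : ℝ) (hρ : 0 < ρ)
    (hcc : limsup (fun n : ℕ =>
        (Real.exp 1 / (2 * n)) * ‖a n‖ ^ ((n : ℝ)⁻¹)) atTop = ρ⁻¹)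
    (z : ℂ)
    (hz : ¬ Tendsto (fun n : ℕ => ∑ k ∈ Finset.range (n + 1), a k * besselJ k z)
      atTop (𝓝 0)) :
    limsup (fun n : ℕ =>
        ‖∑ k ∈ Finset.range (n + 1), a k * besselJ k z‖ ^ ((n : ℝ)⁻¹)) atTop
      = max 1 (‖z‖ / ρ) := by
  have hρi : 0 < ρ⁻¹ := inv_pos.mpr hρ
  set u : ℕ → ℝ := fun n : ℕ =>
    (Real.exp 1 / (2 * n)) * ‖a n‖ ^ ((n : ℝ)⁻¹) with hu
  set F : ℕ → ℂ := fun n : ℕ => ∑ k ∈ Finset.range (n + 1), a k * besselJ k z with hF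
  set b : ℕ → ℝ := fun n : ℕ =>
    ‖∑ k ∈ Finset.range (n + 1), a k * besselJ k z‖ ^ ((n : ℝ)⁻¹) with hb
  have hbF : ∀ n, b n = ‖F n‖ ^ ((n:ℝ)⁻¹) := fun n => rfl
  set w : ℕ → ℝ := fun n : ℕ => ‖a n * besselJ n z‖ ^ ((n:ℝ)⁻¹) with hw
  set v : ℕ → ℝ := fun n : ℕ =>
    2 * (n:ℝ) / Real.exp 1 * (‖besselJ n z‖) ^ ((n:ℝ)⁻¹) with hv
  have hv_lim : Tendsto v atTop (𝓝 (‖z‖)) := tendsto_bessel_root z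
  have hu_nonneg : ∀ n, 0 ≤ u n := fun n => by
    rw [hu]; positivity
  have hv_nonneg : ∀ n, 0 ≤ v n := fun n => by
    rw [hv]; positivity
  have hw_nonneg : ∀ n, 0 ≤ w n := fun n => by
    rw [hw]; positivity
  have hb_nonneg : ∀ n, 0 ≤ b n := fun n => by
    rw [hb]; positivity
  -- w = u * v for n ≥ 1
  have hw_eq : ∀ n : ℕ, 1 ≤ n → w n = u n * v n := by
    intro n hn
    have hn0 : (0:ℝ) < n := by exact_mod_cast hn
    have he : (0:ℝ) < Real.exp 1 := Real.exp_pos 1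
    rw [hw, hu, hv]
    simp only [norm_mul]
    rw [Real.mul_rpow (norm_nonneg _) (norm_nonneg _)]
    field_simp
  -- u is bounded above
  have hu_bdd : IsBoundedUnder (· ≤ ·) atTop u := by
    by_contra hB
    have hS : {x : ℝ | ∀ᶠ n in atTop, u n ≤ x} = ∅ := by
      ext x
      simp only [Set.mem_setOf_eq, Set.mem_empty_iff_false, iff_false]
      intro hx
      exact hB ⟨x, eventually_map.2 hx⟩
    rw [limsup_eq, hS, Real.sInf_empty] at hcc
    exact absurd hcc.symm (ne_of_gt hρi)
  have hu_cob : IsCoboundedUnder (· ≤ ·) atTop u :=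
    isCoboundedUnder_le_of_le atTop hu_nonneg
  have hub : ∀ ε : ℝ, 0 < ε → ∀ᶠ n in atTop, u n ≤ ρ⁻¹ + ε := by
    intro ε hε
    have h1 : limsup u atTop < ρ⁻¹ + ε := by rw [hcc]; linarith
    exact (eventually_lt_of_limsup_lt h1 hu_bdd).mono fun n h => le_of_lt h
  have hufreq : ∀ x : ℝ, x < ρ⁻¹ → ∃ᶠ n in atTop, x < u n := by
    intro x hx
    exact frequently_lt_of_lt_limsup hu_cob (by rw [hcc]; exact hx)
  -- upper eventual bound for w
  have hwub : ∀ ε : ℝ, 0 < ε → ∀ᶠ n in atTop, w n ≤ ‖z‖ * ρ⁻¹ + ε := by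
    intro ε hε
    set δ : ℝ := min 1 (ε / (‖z‖ + ρ⁻¹ + 1)) with hδ
    have hδ0 : 0 < δ := by
      apply lt_min one_pos
      positivity
    have hδ1 : δ ≤ 1 := min_le_left _ _
    have hδ2 : δ * (‖z‖ + ρ⁻¹ + 1) ≤ ε := by
      have h1 : δ ≤ ε / (‖z‖ + ρ⁻¹ + 1) := min_le_right _ _
      have h2 : (0:ℝ) < ‖z‖ + ρ⁻¹ + 1 := by positivity
      calc δ * (‖z‖ + ρ⁻¹ + 1)
          ≤ ε / (‖z‖ + ρ⁻¹ + 1) * (‖z‖ + ρ⁻¹ + 1) :=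
            mul_le_mul_of_nonneg_right h1 (le_of_lt h2)
        _ = ε := by field_simp
    have hvev : ∀ᶠ n in atTop, v n ≤ ‖z‖ + δ :=
      hv_lim.eventually_le_const (by linarith)
    filter_upwards [hub δ hδ0, hvev, eventually_ge_atTop 1] with n h1 h2 hn
    rw [hw_eq n hn]
    calc u n * v n ≤ (ρ⁻¹ + δ) * (‖z‖ + δ) :=
          mul_le_mul h1 h2 (hv_nonneg n) (by linarith)
      _ = ‖z‖ * ρ⁻¹ + δ * (‖z‖ + ρ⁻¹ + δ) := by ring
      _ ≤ ‖z‖ * ρ⁻¹ + δ * (‖z‖ + ρ⁻¹ + 1) := by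
          apply add_le_add_right
          apply mul_le_mul_of_nonneg_left _ (le_of_lt hδ0)
          linarith
      _ ≤ ‖z‖ * ρ⁻¹ + ε := by linarith
  -- frequent lower bound for w (z ≠ 0)
  have hwfreq : z ≠ 0 → ∀ x : ℝ, x < ‖z‖ * ρ⁻¹ → ∃ᶠ n in atTop, x < w n := by
    intro hz0 x hx
    have hza : 0 < ‖z‖ := by simpa using norm_pos_iff.mpr hz0
    set S : ℝ := ‖z‖ + ρ⁻¹ with hS
    have hSpos : 0 < S := by positivity
    set δ : ℝ := min (min (ρ⁻¹/2) (‖z‖/2)) ((‖z‖ * ρ⁻¹ - x) / (2*S)) with hδ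
    have hδ0 : 0 < δ := by
      apply lt_min (lt_min (by linarith) (by linarith))
      have : 0 < ‖z‖ * ρ⁻¹ - x := by linarith
      positivity
    have hδρ : δ ≤ ρ⁻¹/2 := le_trans (min_le_left _ _) (min_le_left _ _)
    have hδz : δ ≤ ‖z‖/2 := le_trans (min_le_left _ _) (min_le_right _ _)
    have hδx : δ * S < ‖z‖ * ρ⁻¹ - x := by
      have h1 : δ ≤ (‖z‖ * ρ⁻¹ - x) / (2*S) := min_le_right _ _
      have h2 : (‖z‖ * ρ⁻¹ - x) / (2*S) * S < ‖z‖ * ρ⁻¹ - x := by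
        rw [div_mul_eq_mul_div]
        rw [div_lt_iff₀ (by positivity)]
        nlinarith
      calc δ * S ≤ (‖z‖ * ρ⁻¹ - x) / (2*S) * S :=
            mul_le_mul_of_nonneg_right h1 (le_of_lt hSpos)
        _ < _ := h2
    have hkey : x < (ρ⁻¹ - δ) * (‖z‖ - δ) := by nlinarith
    have hvev : ∀ᶠ n in atTop, ‖z‖ - δ < v n :=
      hv_lim.eventually_const_lt (by linarith)
    have hfr := (hufreq (ρ⁻¹ - δ) (by linarith)).and_eventually
      (hvev.and (eventually_ge_atTop 1))
    apply hfr.mono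
    rintro n ⟨h1, h2, hn⟩
    rw [hw_eq n hn]
    calc x < (ρ⁻¹ - δ) * (‖z‖ - δ) := hkey
      _ < u n * v n := by
          apply mul_lt_mul'' h1 h2 (by linarith) (by linarith)
  -- big upper bound for b
  set M : ℝ := max 1 (‖z‖ / ρ) with hM
  have hM1 : (1:ℝ) ≤ M := le_max_left _ _
  have hMz : ‖z‖ * ρ⁻¹ ≤ M := by
    rw [← div_eq_mul_inv]
    exact le_max_right _ _
  have hBub : ∀ δ : ℝ, 0 < δ → ∀ᶠ n in atTop, b n ≤ M + δ := by
    intro δ hδ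
    set q : ℝ := M + δ/2 with hq
    have hq1 : 1 ≤ q := by rw [hq]; linarith
    have ht : ∀ᶠ n : ℕ in atTop, ‖a n * besselJ n z‖ ≤ q ^ n := by
      filter_upwards [hwub (δ/2) (by linarith), eventually_ge_atTop 1] with n h1 hn
      apply root_le_of_le (norm_nonneg _) (by omega)
      exact le_trans h1 (by rw [hq]; linarith)
    have h2 := partial_root_le (fun n => a n * besselJ n z) q (δ/2) hq1 (by linarith) ht
    apply h2.mono
    intro n h3
    rw [hb]
    refine le_trans h3 ?_
    rw [hq]; linarith
  have hb_bdd : IsBoundedUnder (· ≤ ·) atTop b :=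
    isBoundedUnder_of_eventually_le (hBub 1 one_pos)
  have hb_cob : IsCoboundedUnder (· ≤ ·) atTop b :=
    isCoboundedUnder_le_of_le atTop hb_nonneg
  have hupper : limsup b atTop ≤ M := by
    apply _root_.le_of_forall_pos_le_add
    intro ε hε
    exact limsup_le_of_le hb_cob (hBub ε hε)
  -- lower bound 1
  have h1le : 1 ≤ limsup b atTop := by
    by_contra hlt
    push_neg at hlt
    set r : ℝ := (max (limsup b atTop) 0 + 1) / 2 with hr
    have hmax1 : max (limsup b atTop) 0 < 1 := max_lt hlt one_pos
    have hr0 : 0 < r := by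
      rw [hr]
      have : (0:ℝ) ≤ max (limsup b atTop) 0 := le_max_right _ _
      linarith
    have hr1 : r < 1 := by rw [hr]; linarith
    have hrL : limsup b atTop < r := by
      rw [hr]
      have h1 : limsup b atTop ≤ max (limsup b atTop) 0 := le_max_left _ _
      linarith
    have hev := eventually_lt_of_limsup_lt hrL hb_bdd
    apply hz
    have hFtend : Tendsto F atTop (𝓝 0) := by
      apply squeeze_zero_norm' (f := F) (a := fun n => r ^ n)
        (h' := tendsto_pow_atTop_nhds_zero_of_lt_one (le_of_lt hr0) hr1)
      filter_upwards [hev, eventually_ge_atTop 1] with n h1 hn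
      exact root_le_of_le (norm_nonneg _) (by omega) (le_of_lt h1)
    exact hFtend
  -- lower bound |z| * ρ⁻¹
  have h2le : ‖z‖ * ρ⁻¹ ≤ limsup b atTop := by
    rcases eq_or_ne z 0 with rfl | hz0
    · simp only [norm_zero, zero_mul]
      exact le_trans zero_le_one h1le
    by_contra hlt
    push_neg at hlt
    have hza : 0 < ‖z‖ := by simpa using norm_pos_iff.mpr hz0
    have hzρ : 0 < ‖z‖ * ρ⁻¹ := by positivity
    set L : ℝ := limsup b atTop with hL
    set r : ℝ := (max L 0 + ‖z‖ * ρ⁻¹) / 2 with hr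
    have hmax : max L 0 < ‖z‖ * ρ⁻¹ := max_lt hlt hzρ
    have hr0 : 0 < r := by
      rw [hr]
      have : (0:ℝ) ≤ max L 0 := le_max_right _ _
      linarith
    have hrlt : r < ‖z‖ * ρ⁻¹ := by rw [hr]; linarith
    have hrL : L < r := by
      rw [hr]
      have h1 : L ≤ max L 0 := le_max_left _ _
      linarith
    set r₂ : ℝ := (r + ‖z‖ * ρ⁻¹) / 2 with hr₂
    have hrr₂ : r < r₂ := by rw [hr₂]; linarith
    have hr₂lt : r₂ < ‖z‖ * ρ⁻¹ := by rw [hr₂]; linarith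
    have hev := eventually_lt_of_limsup_lt hrL hb_bdd
    obtain ⟨N, hN⟩ := eventually_atTop.1 hev
    -- the comparison sequence
    have hs_lim : Tendsto (fun n : ℕ => (1+r) ^ ((n:ℝ)⁻¹) * r ^ (1 - (n:ℝ)⁻¹)) atTop (𝓝 r) := by
      have t1 : Tendsto (fun n : ℕ => (1+r) ^ ((n:ℝ)⁻¹)) atTop (𝓝 1) :=
        tendsto_const_rpow_inv (1+r) (by linarith)
      have t2 : Tendsto (fun n : ℕ => r ^ (1 - (n:ℝ)⁻¹)) atTop (𝓝 r) := by
        have texp : Tendsto (fun n : ℕ => 1 - (n:ℝ)⁻¹) atTop (𝓝 1) := by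
          have := tendsto_inv_atTop_zero.comp (tendsto_natCast_atTop_atTop (R := ℝ))
          have h2 := (tendsto_const_nhds (x := (1:ℝ))).sub this
          simpa using h2
        have hcont : Tendsto (fun y : ℝ => r ^ y) (𝓝 1) (𝓝 r) := by
          have h3 : ContinuousAt (fun y : ℝ => r ^ y) 1 :=
            (Real.continuousAt_const_rpow (ne_of_gt hr0))
          simpa [Real.rpow_one] using h3.tendsto
        exact hcont.comp texp
      have := t1.mul t2
      simpa using this
    have hsev : ∀ᶠ n : ℕ in atTop, (1+r) ^ ((n:ℝ)⁻¹) * r ^ (1 - (n:ℝ)⁻¹) < r₂ :=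
      hs_lim.eventually_lt_const hrr₂
    have hwle : ∀ᶠ n : ℕ in atTop, w n ≤ (1+r) ^ ((n:ℝ)⁻¹) * r ^ (1 - (n:ℝ)⁻¹) := by
      filter_upwards [eventually_ge_atTop (max N 1 + 1)] with n hn
      have hn2 : 2 ≤ n := by
        have := le_max_right N 1; omega
      have hnN : N ≤ n := by
        have := le_max_left N 1; omega
      have hm : n - 1 ≥ N := by
        have := le_max_left N 1; omega
      have hm1 : 1 ≤ n - 1 := by
        have := le_max_right N 1; omega
      -- |F n| and |F (n-1)| bounds
      have hFn : ‖F n‖ ≤ r ^ n :=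
        root_le_of_le (norm_nonneg _) (by omega) (le_of_lt (hN n hnN))
      have hFm : ‖F (n-1)‖ ≤ r ^ (n-1) := by
        apply root_le_of_le (norm_nonneg _) (by omega)
        exact le_of_lt (hN (n-1) hm)
      have htF : a n * besselJ n z = F n - F (n-1) := by
        rw [hF]
        simp only
        have hsucc : n - 1 + 1 = n := by omega
        rw [hsucc, Finset.sum_range_succ]
        ring
      have htb : ‖a n * besselJ n z‖ ≤ r ^ (n-1) * (1 + r) := by
        rw [htF]
        calc ‖F n - F (n-1)‖ ≤ ‖F n‖ + ‖F (n-1)‖ := by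
              exact norm_sub_le (F n) (F (n-1))
          _ ≤ r ^ n + r ^ (n-1) := add_le_add hFn hFm
          _ = r ^ (n-1) * (1 + r) := by
              have : r ^ n = r ^ (n-1) * r := by
                rw [← pow_succ]
                congr 1
                omega
              rw [this]; ring
      rw [hw]
      calc ‖a n * besselJ n z‖ ^ ((n:ℝ)⁻¹)
          ≤ (r ^ (n-1) * (1 + r)) ^ ((n:ℝ)⁻¹) :=
            Real.rpow_le_rpow (norm_nonneg _) htb (by positivity)
        _ = (1+r) ^ ((n:ℝ)⁻¹) * r ^ (1 - (n:ℝ)⁻¹) := by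
            rw [Real.mul_rpow (by positivity) (by linarith)]
            rw [mul_comm ((r ^ (n-1) : ℝ) ^ ((n:ℝ)⁻¹)) _]
            congr 1
            rw [← Real.rpow_natCast_mul (le_of_lt hr0)]
            congr 1
            have hcast : ((n-1 : ℕ) : ℝ) = (n:ℝ) - 1 := by
              have : (1:ℕ) ≤ n := by omega
              push_cast [Nat.cast_sub this]
              ring
            rw [hcast]
            have hnne : (n:ℝ) ≠ 0 := by
              have : (0:ℕ) < n := by omega
              positivity
            field_simp
    have hfr := ((hwfreq hz0 r₂ hr₂lt).and_eventually (hwle.and hsev)).exists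
    obtain ⟨n, hn1, hn2, hn3⟩ := hfr
    linarith
  -- conclude
  refine le_antisymm hupper ?_
  apply max_le h1le
  rw [div_eq_mul_inv]
  exact h2le
end

section
/- Let (a_n)_{n≥0} be complex coefficients such that ρ^{-1} := limsup_{n→∞} (e/(2n)) |a_n|^{1/n} satisfies 0 < ρ^{-1} < ∞. Then for every z ∈ ℂ with |z| > ρ, the Neumann series Σ_{n=0}^∞ a_n J_n(z) diverges, i.e. the sequence of partial sums Σ_{k=0}^n a_k J_k(z) does not converge. -/
open Filter Topology

lemma fact_upper (n : ℕ) (hn : 1 ≤ n) :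
    (n.factorial : ℝ) ≤ Real.exp 1 * Real.sqrt n * ((n : ℝ) / Real.exp 1) ^ n := by
  obtain ⟨m, rfl⟩ := Nat.exists_eq_add_of_le hn
  have h := Stirling.stirlingSeq'_antitone (Nat.zero_le m)
  simp only [Function.comp, Nat.succ_eq_add_one, zero_add] at h
  rw [Stirling.stirlingSeq_one, Stirling.stirlingSeq] at h
  have hpos : (0:ℝ) < Real.sqrt (2 * ((m:ℝ)+1)) * (((m:ℝ)+1) / Real.exp 1) ^ (m+1) := by
    positivity
  rw [div_le_iff₀ (by push_cast at hpos ⊢; exact hpos)] at h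
  calc ((1+m).factorial : ℝ) = ((m+1).factorial : ℝ) := by rw [add_comm]
    _ ≤ Real.exp 1 / Real.sqrt 2 * (Real.sqrt (2*((m:ℕ)+1:ℕ)) * (((m:ℕ)+1:ℕ)/Real.exp 1)^(m+1)) := h
    _ = Real.exp 1 * Real.sqrt ((1+m : ℕ)) * (((1+m : ℕ):ℝ) / Real.exp 1) ^ (1+m) := by
        push_cast
        rw [show (2:ℝ) * ((m:ℝ)+1) = 2 * ((m:ℝ)+1) from rfl, Real.sqrt_mul (by norm_num)]
        rw [add_comm 1 (m:ℝ), add_comm 1 m]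
        field_simp

lemma besselJ_lower (z : ℂ) :
    ∀ᶠ n : ℕ in atTop,
      (‖z‖ / 2) ^ n / (2 * n.factorial) ≤ ‖besselJ n z‖ := by
  set r := ‖z‖ with hr
  have hr0 : 0 ≤ r := norm_nonneg z
  set w : ℝ := (r / 2) ^ 2 with hw
  have hw0 : 0 ≤ w := sq_nonneg _
  have hCsum : Summable (fun k : ℕ => w ^ k / k.factorial) :=
    Real.summable_pow_div_factorial w
  set C : ℝ := ∑' k : ℕ, w ^ k / k.factorial with hC
  have hC1 : 1 ≤ C := by
    have := hCsum.le_tsum 0 (fun j _ => by positivity)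
    simpa using this
  have hCtail : ∑' k : ℕ, w ^ (k + 1) / (k + 1).factorial ≤ C := by
    have h0 := hCsum.tsum_eq_zero_add
    simp only [pow_zero, Nat.factorial_zero, Nat.cast_one, div_one] at h0
    have : ∑' k : ℕ, w ^ (k + 1) / (k + 1).factorial = C - 1 := by
      rw [hC, h0]; ring
    linarith
  filter_upwards [eventually_ge_atTop (⌈2 * C⌉₊)] with n hn
  have hn' : 2 * C ≤ (n : ℝ) + 1 := by
    have := Nat.le_ceil (2 * C)
    have h2 : (⌈2 * C⌉₊ : ℝ) ≤ n := Nat.cast_le.mpr hn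
    linarith
  set t : ℕ → ℂ := fun k =>
    ((-1 : ℂ) ^ k / ((k.factorial : ℂ) * ((n + k).factorial : ℂ))) * (z / 2) ^ (n + 2 * k)
    with htdef
  have habs : ∀ k, ‖t k‖
      = (r / 2) ^ (n + 2 * k) / (k.factorial * (n + k).factorial) := by
    intro k
    simp only [htdef, norm_mul, norm_div, norm_pow, Complex.norm_natCast, Complex.norm_two]
    norm_num [Complex.norm_two, hr]
    ring
  have hpowsplit : ∀ k, (r / 2) ^ (n + 2 * k) = (r / 2) ^ n * w ^ k := by
    intro k; rw [pow_add, hw, ← pow_mul]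
  have hbound : ∀ k, ‖t (k + 1)‖
      ≤ (r / 2) ^ n / ((n + 1) * n.factorial) * (w ^ (k + 1) / (k + 1).factorial) := by
    intro k
    rw [habs, hpowsplit]
    have hfac : ((n + 1) * n.factorial * (k + 1).factorial : ℝ)
        ≤ ((k + 1).factorial * (n + (k + 1)).factorial : ℝ) := by
      have h1 : (n + 1) * n.factorial * (k + 1).factorial ≤ (n + (k + 1)).factorial := by
        have hch : n + 1 ≤ (n + (k + 1)).choose (k + 1) := by
          have h := Nat.choose_le_choose n (show n + 1 ≤ n + (k + 1) by omega)
          rw [Nat.choose_succ_self_right] at h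
          rwa [← Nat.choose_symm_add]
        calc (n + 1) * n.factorial * (k + 1).factorial
            ≤ (n + (k + 1)).choose (k + 1) * n.factorial * (k + 1).factorial := by
              exact Nat.mul_le_mul_right _ (Nat.mul_le_mul_right _ hch)
          _ = (n + (k + 1)).factorial := Nat.add_choose_mul_factorial_mul_factorial n (k + 1)
      calc ((n + 1) * n.factorial * (k + 1).factorial : ℝ)
          ≤ ((n + (k + 1)).factorial : ℝ) := by exact_mod_cast h1
        _ ≤ ((k + 1).factorial * (n + (k + 1)).factorial : ℝ) := by
            have h1 : (1:ℝ) ≤ ((k + 1).factorial : ℝ) := by exact_mod_cast (k+1).factorial_pos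
            have h2 : (0:ℝ) < ((n + (k + 1)).factorial : ℝ) := by exact_mod_cast (n+(k+1)).factorial_pos
            nlinarith
    rw [div_mul_div_comm]
    apply div_le_div_of_nonneg_left _ (by positivity) _
    · positivity
    · calc ((n:ℝ) + 1) * n.factorial * (k + 1).factorial
          ≤ ((k + 1).factorial * (n + (k + 1)).factorial : ℝ) := by push_cast at hfac ⊢; linarith
        _ = _ := by push_cast; ring_nf
  -- summability of t
  have hnormle : ∀ k, ‖t k‖ ≤ (r / 2) ^ n / n.factorial * (w ^ k / k.factorial) := by
    intro k
    rw [habs, hpowsplit]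
    have hfac : (n.factorial * k.factorial : ℝ) ≤ (k.factorial * (n + k).factorial : ℝ) := by
      have h1 : (n.factorial : ℝ) ≤ ((n + k).factorial : ℝ) := by
        exact_mod_cast Nat.factorial_le (Nat.le_add_right n k)
      have h2 : (0:ℝ) < (k.factorial : ℝ) := by exact_mod_cast k.factorial_pos
      nlinarith
    rw [div_mul_div_comm]
    apply div_le_div_of_nonneg_left _ (by positivity) _
    · positivity
    · linarith
  have ht : Summable t :=
    Summable.of_norm_bounded (hCsum.mul_left _) hnormle
  have hshift : Summable (fun k : ℕ => w ^ (k + 1) / (k + 1).factorial) := by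
    have := hCsum.comp_injective (add_left_injective 1)
    exact this
  set S : ℂ := ∑' k : ℕ, t (k + 1) with hS
  have hJ : besselJ n z = t 0 + S := by
    rw [besselJ, hS]
    exact ht.tsum_eq_zero_add
  have ht0 : ‖t 0‖ = (r / 2) ^ n / n.factorial := by
    rw [habs 0]
    simp
  have hnorms : Summable (fun k : ℕ => ‖t (k + 1)‖) := by
    apply Summable.of_nonneg_of_le (fun k => norm_nonneg _) _ (hshift.mul_left ((r / 2) ^ n / ((n + 1) * n.factorial)))
    intro k
    exact hbound k
  have hStail : ‖S‖ ≤ (r / 2) ^ n / (2 * n.factorial) := by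
    have h1 : ‖S‖ ≤ ∑' k : ℕ, ‖t (k + 1)‖ := norm_tsum_le_tsum_norm hnorms
    have h2 : ∑' k : ℕ, ‖t (k + 1)‖
        ≤ ∑' k : ℕ, (r / 2) ^ n / ((n + 1) * n.factorial) * (w ^ (k + 1) / (k + 1).factorial) := by
      apply hnorms.tsum_le_tsum _ (hshift.mul_left _)
      intro k
      exact hbound k
    have h3 : ∑' k : ℕ, (r / 2) ^ n / ((n + 1) * n.factorial) * (w ^ (k + 1) / (k + 1).factorial)
        = (r / 2) ^ n / ((n + 1) * n.factorial) * ∑' k : ℕ, w ^ (k + 1) / (k + 1).factorial :=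
      tsum_mul_left
    have h4 : (r / 2) ^ n / ((n + 1) * n.factorial) * ∑' k : ℕ, w ^ (k + 1) / (k + 1).factorial
        ≤ (r / 2) ^ n / ((n + 1) * n.factorial) * C := by
      apply mul_le_mul_of_nonneg_left hCtail (by positivity)
    have h5 : (r / 2) ^ n / ((n + 1) * n.factorial) * C ≤ (r / 2) ^ n / (2 * n.factorial) := by
      rw [div_mul_eq_mul_div, div_le_div_iff₀ (by positivity) (by positivity)]
      have hp : (0:ℝ) ≤ (r / 2) ^ n * n.factorial := by positivity
      nlinarith
    linarith
  have htri : ‖t 0‖ - ‖S‖ ≤ ‖t 0 + S‖ := by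
    have h := norm_sub_norm_le (t 0) (-S)
    simpa [sub_neg_eq_add] using h
  rw [hJ]
  rw [ht0] at htri
  have hsplit : (r / 2) ^ n / n.factorial - (r / 2) ^ n / (2 * n.factorial)
      = (r / 2) ^ n / (2 * n.factorial) := by
    have : (0:ℝ) < (n.factorial : ℝ) := by exact_mod_cast n.factorial_pos
    field_simp
    ring
  linarith


/-- a Neumann series with convergence level `ρ`, `0 < ρ⁻¹ < ∞`, diverges at
every point `|z| > ρ`. -/
theorem stmt_11
    (a : ℕ → ℂ) (ρ : ℝ) (hρ : 0 < ρ)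
    (hcc : limsup (fun n : ℕ =>
        (Real.exp 1 / (2 * n)) * ‖a n‖ ^ ((n : ℝ)⁻¹)) atTop = ρ⁻¹)
    (z : ℂ) (hz : ρ < ‖z‖) :
    ¬ ∃ L : ℂ, Tendsto (fun n : ℕ => ∑ k ∈ Finset.range (n + 1), a k * besselJ k z)
      atTop (𝓝 L) := by
  rintro ⟨L, hL⟩
  set E := Real.exp 1 with hE
  have hE0 : 0 < E := Real.exp_pos 1
  set r := ‖z‖ with hrdef
  have hr0 : 0 < r := lt_trans hρ hz
  set c : ℝ := (ρ + r) / 2 with hcdef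
  have hc0 : 0 < c := by positivity
  have hcρ : ρ < c := by rw [hcdef]; linarith
  have hcr : c < r := by rw [hcdef]; linarith
  set q : ℝ := r / c with hqdef
  have hq1 : 1 < q := (one_lt_div hc0).mpr hcr
  have hq0 : 0 < q := lt_trans one_pos hq1
  -- terms tend to zero
  have hterm : Tendsto (fun n : ℕ => a n * besselJ n z) atTop (𝓝 0) := by
    have hdiff : Tendsto (fun n : ℕ =>
        (∑ k ∈ Finset.range (n + 1 + 1), a k * besselJ k z)
          - ∑ k ∈ Finset.range (n + 1), a k * besselJ k z) atTop (𝓝 (L - L)) :=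
      (hL.comp (tendsto_add_atTop_nat 1)).sub hL
    rw [sub_self] at hdiff
    have heq : ∀ n : ℕ,
        (∑ k ∈ Finset.range (n + 1 + 1), a k * besselJ k z)
          - ∑ k ∈ Finset.range (n + 1), a k * besselJ k z
          = a (n + 1) * besselJ (n + 1) z := by
      intro n
      rw [Finset.sum_range_succ]
      ring
    have h1 : Tendsto (fun n : ℕ => a (n + 1) * besselJ (n + 1) z) atTop (𝓝 0) :=
      hdiff.congr heq
    exact (tendsto_add_atTop_iff_nat 1).mp h1
  have hev1 : ∀ᶠ n : ℕ in atTop, ‖a n * besselJ n z‖ < 1 := by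
    have := (NormedAddCommGroup.tendsto_nhds_zero.mp hterm) 1 one_pos
    simpa using this
  -- frequently large coefficients
  have hfreq : ∃ᶠ n : ℕ in atTop,
      c⁻¹ < (E / (2 * n)) * ‖a n‖ ^ ((n : ℝ)⁻¹) := by
    apply frequently_lt_of_lt_limsup
    · exact isCoboundedUnder_le_of_le atTop (x := 0) (fun n => by positivity)
    · rw [hcc]
      exact inv_strictAnti₀ hρ hcρ
  -- geometric growth
  have hgeo : ∀ᶠ n : ℕ in atTop, 2 * E * n ≤ q ^ n := by
    have hlt : ‖q⁻¹‖ < 1 := by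
      rw [Real.norm_eq_abs, abs_of_pos (inv_pos.mpr hq0)]
      exact inv_lt_one_of_one_lt₀ hq1
    have hsum : Summable (fun n : ℕ => (n : ℝ) ^ 1 * (q⁻¹) ^ n) :=
      summable_pow_mul_geometric_of_norm_lt_one 1 hlt
    have htend := hsum.tendsto_atTop_zero
    have hev := htend.eventually (gt_mem_nhds (show (0:ℝ) < (2 * E)⁻¹ by positivity))
    filter_upwards [hev] with n hn
    simp only [pow_one, Set.mem_setOf_eq] at hn
    have hqn : (0:ℝ) < q ^ n := pow_pos hq0 n
    rw [inv_pow] at hn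
    have h1 : (n : ℝ) * (q ^ n)⁻¹ * (q ^ n) < (2 * E)⁻¹ * q ^ n :=
      mul_lt_mul_of_pos_right hn hqn
    rw [mul_assoc, inv_mul_cancel₀ (ne_of_gt hqn), mul_one] at h1
    rw [inv_mul_eq_div, lt_div_iff₀ (by positivity)] at h1
    linarith
  -- combine
  obtain ⟨n, hlt, ⟨hb1, hJlow⟩, hgeon, hn1⟩ :=
    (hfreq.and_eventually ((hev1.and (besselJ_lower z)).and
      (hgeo.and (eventually_ge_atTop 1)))).exists
  have hn0 : (0:ℝ) < n := by exact_mod_cast hn1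
  -- coefficient lower bound
  set X : ℝ := ‖a n‖ ^ ((n : ℝ)⁻¹) with hX
  have hA : 2 * n / (E * c) < X := by
    have h2 : 2 * (n:ℝ) / (E * c) = (2 * n / E) * c⁻¹ := by
      field_simp
    calc 2 * (n:ℝ) / (E * c) = (2 * n / E) * c⁻¹ := h2
      _ < (2 * n / E) * ((E / (2 * n)) * X) :=
          mul_lt_mul_of_pos_left hlt (by positivity)
      _ = X := by field_simp
  have haN : (2 * (n:ℝ) / (E * c)) ^ n < ‖a n‖ := by
    have h0 : (0:ℝ) ≤ 2 * n / (E * c) := by positivity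
    have := pow_lt_pow_left₀ hA h0 (Nat.one_le_iff_ne_zero.mp hn1)
    rwa [hX, Real.rpow_inv_natCast_pow (norm_nonneg _)
      (Nat.one_le_iff_ne_zero.mp hn1)] at this
  -- factorial upper bound
  have hfact := fact_upper n hn1
  set s : ℝ := Real.sqrt n with hs
  have hs0 : 0 < s := Real.sqrt_pos.mpr hn0
  have hs1 : 1 ≤ s := Real.one_le_sqrt.mpr (by exact_mod_cast hn1)
  set P : ℝ := ((n:ℝ) / E) ^ n with hP
  have hP0 : 0 < P := by positivity
  have hF0 : (0:ℝ) < n.factorial := by exact_mod_cast n.factorial_pos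
  -- chain
  have key : 1 ≤ ‖a n * besselJ n z‖ := by
    have hcomb : P * q ^ n / (2 * n.factorial) ≤ ‖a n * besselJ n z‖ := by
      rw [norm_mul]
      have h1 : (2 * (n:ℝ) / (E * c)) ^ n * ((r / 2) ^ n / (2 * n.factorial))
          ≤ ‖a n‖ * ‖besselJ n z‖ := by
        apply mul_le_mul (le_of_lt haN) hJlow (by positivity)
          (norm_nonneg _)
      calc P * q ^ n / (2 * n.factorial)
          = (2 * (n:ℝ) / (E * c)) ^ n * ((r / 2) ^ n / (2 * n.factorial)) := by
            have hbase : ((n:ℝ)/E) * (r/c) = (2*(n:ℝ)/(E*c)) * (r/2) := by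
              field_simp
            rw [hP, hqdef, ← mul_pow, hbase, mul_pow, mul_div_assoc]
        _ ≤ _ := h1
    have h2 : q ^ n / (2 * E * s) ≤ P * q ^ n / (2 * n.factorial) := by
      have hle : (2:ℝ) * n.factorial ≤ 2 * E * s * P := by nlinarith
      calc q ^ n / (2 * E * s) = P * q ^ n / (2 * E * s * P) := by
            field_simp
        _ ≤ P * q ^ n / (2 * n.factorial) := by
            apply div_le_div_of_nonneg_left (by positivity) (by positivity) hle
    have h3 : s ≤ q ^ n / (2 * E * s) := by
      rw [le_div_iff₀ (by positivity)]
      have hss : s * s = (n:ℝ) := Real.mul_self_sqrt (le_of_lt hn0)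
      nlinarith
    linarith
  rw [← not_lt] at key
  exact key hb1
end

section
/- The Kapteyn series Σ_{n=1}^∞ n^{−2} J_n(nz) converges absolutely and uniformly on the set {z ∈ ℂ : Ω(z) ≤ 1}; in particular it converges at every point of S = {x ∈ ℝ : |x| ≥ 1}, even though its convergence level is ρ = 1 (that is, limsup_{n→∞} |n^{−2}|^{1/n} = 1). -/
set_option maxHeartbeats 1000000


open Filter Topology

/-- The Kapteyn height function `Ω(z) = |z exp(√(1-z²)) / (1 + √(1-z²))|`, with the principal
branch of the square root. -/
noncomputable def Omega (z : ℂ) : ℝ :=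
  ‖z * Complex.exp ((1 - z ^ 2) ^ ((1 : ℂ) / 2)) /
    (1 + (1 - z ^ 2) ^ ((1 : ℂ) / 2))‖

/-- The exceptional set `S = {x ∈ ℝ : |x| ≥ 1}` regarded as a subset of `ℂ`. -/
def SlitSet : Set ℂ := {z : ℂ | z.im = 0 ∧ 1 ≤ |z.re|}


namespace KapteynAux


open Complex MeasureTheory

lemma fourier_int (m : ℤ) :
    ∫ θ in Set.Ioc (0:ℝ) (2*Real.pi), Complex.exp ((m:ℂ) * I * θ)
      = if m = 0 then (2*Real.pi : ℂ) else 0 := by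
  have h2 : (0:ℝ) ≤ 2*Real.pi := by positivity
  rw [← intervalIntegral.integral_of_le h2]
  rcases eq_or_ne m 0 with rfl | hm
  · simp
  · have hc : (m:ℂ) * I ≠ 0 := by simp [Complex.ext_iff, hm]
    rw [integral_exp_mul_complex hc, if_neg hm]
    have h1 : Complex.exp ((m:ℂ) * I * ((2*Real.pi : ℝ):ℂ)) = 1 := by
      have := Complex.exp_int_mul_two_pi_mul_I m
      rw [← this]; push_cast; ring_nf
    rw [h1]; simp

lemma besselJ_rep (n : ℕ) (w : ℂ) (r : ℝ) (hr : 0 < r) :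
    (∫ θ in Set.Ioc (0:ℝ) (2*Real.pi),
      Complex.exp (w/2 * (r * Complex.exp (θ * I) - Complex.exp (-(θ * I))/r)) *
        Complex.exp (-(θ * I)) ^ n)
      = 2 * Real.pi * (r:ℂ) ^ n * besselJ n w := by
  classical
  set g : ℕ × ℕ → ℝ → ℂ := fun pq θ =>
    ((w * r * Complex.exp (θ*I) / 2)^pq.1 / pq.1.factorial) *
      (((-w) * Complex.exp (-(θ*I)) / (2*r))^pq.2 / pq.2.factorial) *
      Complex.exp (-(θ*I))^n with hg
  have hA : ∀ θ : ℝ, Complex.exp (w/2 * (r * Complex.exp (θ * I) - Complex.exp (-(θ * I))/r)) *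
      Complex.exp (-(θ * I)) ^ n = ∑' pq : ℕ × ℕ, g pq θ := by
    intro θ
    have hexp : ∀ x : ℂ, Complex.exp x = ∑' p : ℕ, x^p / p.factorial := by
      intro x; rw [Complex.exp_eq_exp_ℂ, NormedSpace.exp_eq_tsum_div]
    have hXs : Summable fun p : ℕ => ‖(w * r * Complex.exp (θ*I) / 2)^p / (p.factorial : ℂ)‖ := by
      simpa [norm_div, norm_pow] using
        Real.summable_pow_div_factorial ‖w * r * Complex.exp (θ*I) / 2‖
    have hYs : Summable fun q : ℕ => ‖((-w) * Complex.exp (-(θ*I)) / (2*r))^q / (q.factorial : ℂ)‖ := by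
      simpa [norm_div, norm_pow] using
        Real.summable_pow_div_factorial ‖(-w) * Complex.exp (-(θ*I)) / (2*r)‖
    have harg : w/2 * (r * Complex.exp (θ * I) - Complex.exp (-(θ * I))/r)
        = (w * r * Complex.exp (θ*I) / 2) + ((-w) * Complex.exp (-(θ*I)) / (2*r)) := by
      field_simp; ring
    rw [harg, Complex.exp_add, hexp (w * r * Complex.exp (θ*I) / 2),
      hexp ((-w) * Complex.exp (-(θ*I)) / (2*r)), tsum_mul_tsum_of_summable_norm hXs hYs,
      ← tsum_mul_right]
  have hgexp : ∀ pq : ℕ × ℕ, ∀ θ : ℝ, g pq θ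
      = (((w * r / 2)^pq.1 / pq.1.factorial) * (((-w) / (2*r))^pq.2 / pq.2.factorial)) *
        Complex.exp ((((pq.1:ℤ) - pq.2 - n : ℤ):ℂ) * I * θ) := by
    rintro ⟨p, q⟩ θ
    have e1 : Complex.exp (θ*I)^p = Complex.exp ((p:ℂ) * (θ*I)) := by rw [← Complex.exp_nat_mul]
    have e2 : Complex.exp (-(θ*I))^q = Complex.exp ((q:ℂ) * (-(θ*I))) := by
      rw [← Complex.exp_nat_mul]
    have e3 : Complex.exp (-(θ*I))^n = Complex.exp ((n:ℂ) * (-(θ*I))) := by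
      rw [← Complex.exp_nat_mul]
    have h1 : w * r * Complex.exp (θ*I) / 2 = (w * r / 2) * Complex.exp (θ*I) := by ring
    have h2 : (-w) * Complex.exp (-(θ*I)) / (2*r) = ((-w) / (2*r)) * Complex.exp (-(θ*I)) := by
      ring
    simp only [hg]
    rw [h1, h2, mul_pow, mul_pow, e1, e2, e3]
    rw [show (((p:ℤ) - q - n : ℤ):ℂ) * I * θ
        = (p:ℂ) * (θ*I) + ((q:ℂ) * (-(θ*I)) + (n:ℂ) * (-(θ*I))) by push_cast; ring]
    rw [Complex.exp_add, Complex.exp_add]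
    ring
  have hnorm : ∀ pq : ℕ × ℕ, ∀ θ : ℝ, ‖g pq θ‖
      = ((‖w‖ * r / 2)^pq.1 / pq.1.factorial) * ((‖w‖ / (2*r))^pq.2 / pq.2.factorial) := by
    rintro ⟨p, q⟩ θ
    have habs : ∀ x : ℝ, ‖Complex.exp ((x:ℂ)*I)‖ = 1 := by
      intro x
      rw [Complex.norm_exp]
      simp [Complex.mul_re]
    have habs' : ‖Complex.exp (-((θ:ℂ)*I))‖ = 1 := by
      rw [show -((θ:ℂ)*I) = ((-θ:ℝ):ℂ)*I by push_cast; ring, habs]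
    simp only [hg, norm_mul, norm_div, norm_pow, norm_neg, habs θ, habs', one_pow, mul_one]
    simp [Complex.norm_real, Real.norm_eq_abs, abs_of_pos hr, Complex.norm_natCast,
      Complex.norm_ofNat]
  have hCs : Summable (fun pq : ℕ × ℕ =>
      ((‖w‖ * r / 2)^pq.1 / pq.1.factorial) * ((‖w‖ / (2*r))^pq.2 / pq.2.factorial)) := by
    have s1 : Summable fun p : ℕ => ‖(‖w‖ * r / 2)^p / (p.factorial:ℝ)‖ :=
      ((Real.summable_pow_div_factorial (‖w‖ * r / 2)).abs).congr
        (fun p => (Real.norm_eq_abs _).symm)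
    have s2 : Summable fun q : ℕ => ‖(‖w‖ / (2*r))^q / (q.factorial:ℝ)‖ :=
      ((Real.summable_pow_div_factorial (‖w‖ / (2*r))).abs).congr
        (fun q => (Real.norm_eq_abs _).symm)
    exact summable_mul_of_summable_norm s1 s2
  have hCnn : ∀ pq : ℕ × ℕ,
      0 ≤ ((‖w‖ * r / 2)^pq.1 / pq.1.factorial) * ((‖w‖ / (2*r))^pq.2 / pq.2.factorial) := by
    intro pq; positivity
  have hmeas : ∀ pq : ℕ × ℕ,
      AEStronglyMeasurable (g pq) (volume.restrict (Set.Ioc (0:ℝ) (2*Real.pi))) := by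
    intro pq
    apply Continuous.aestronglyMeasurable
    simp only [hg]
    fun_prop
  have hlint : (∑' pq : ℕ × ℕ, ∫⁻ θ, ‖g pq θ‖₊
      ∂(volume.restrict (Set.Ioc (0:ℝ) (2*Real.pi)))) ≠ ⊤ := by
    have heach : ∀ pq : ℕ × ℕ, (∫⁻ θ, ‖g pq θ‖₊
        ∂(volume.restrict (Set.Ioc (0:ℝ) (2*Real.pi))))
        = ENNReal.ofReal (((‖w‖ * r / 2)^pq.1 / pq.1.factorial) *
            ((‖w‖ / (2*r))^pq.2 / pq.2.factorial)) * ENNReal.ofReal (2*Real.pi - 0) := by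
      intro pq
      have : (fun θ : ℝ => (‖g pq θ‖₊ : ENNReal))
          = fun _ => ENNReal.ofReal (((‖w‖ * r / 2)^pq.1 / pq.1.factorial) *
              ((‖w‖ / (2*r))^pq.2 / pq.2.factorial)) := by
        funext θ
        rw [← enorm_eq_nnnorm, ← ofReal_norm, hnorm pq θ]
      rw [this, lintegral_const, Measure.restrict_apply_univ, Real.volume_Ioc]
    simp_rw [heach]
    rw [ENNReal.tsum_mul_right, ← ENNReal.ofReal_tsum_of_nonneg hCnn hCs]
    exact ENNReal.mul_ne_top ENNReal.ofReal_ne_top ENNReal.ofReal_ne_top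
  have hswap : (∫ θ in Set.Ioc (0:ℝ) (2*Real.pi), ∑' pq : ℕ × ℕ, g pq θ)
      = ∑' pq : ℕ × ℕ, ∫ θ in Set.Ioc (0:ℝ) (2*Real.pi), g pq θ :=
    integral_tsum hmeas hlint
  have hint : ∀ pq : ℕ × ℕ, (∫ θ in Set.Ioc (0:ℝ) (2*Real.pi), g pq θ)
      = (((w * r / 2)^pq.1 / pq.1.factorial) * (((-w) / (2*r))^pq.2 / pq.2.factorial)) *
        (if ((pq.1:ℤ) - pq.2 - n) = 0 then (2*Real.pi:ℂ) else 0) := by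
    intro pq
    simp_rw [hgexp pq]
    rw [MeasureTheory.integral_const_mul, fourier_int]
  simp_rw [hA, hswap]
  simp_rw [hint]
  set C : ℕ × ℕ → ℂ := fun pq =>
    (((w * r / 2)^pq.1 / pq.1.factorial) * (((-w) / (2*r))^pq.2 / pq.2.factorial)) *
      (if ((pq.1:ℤ) - pq.2 - n) = 0 then (2*Real.pi:ℂ) else 0) with hC
  have hinj : Function.Injective (fun q : ℕ => ((q + n, q) : ℕ × ℕ)) := by
    intro a b h
    exact congrArg Prod.snd h
  have hsupp : Function.support C ⊆ Set.range (fun q : ℕ => ((q + n, q) : ℕ × ℕ)) := by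
    intro pq hpq
    by_cases hd : ((pq.1:ℤ) - pq.2 - n) = 0
    · exact ⟨pq.2, by ext <;> simp <;> omega⟩
    · exfalso; apply hpq; simp only [hC, if_neg hd, mul_zero]
  have hdiag : (∑' q : ℕ, C (q + n, q)) = ∑' pq : ℕ × ℕ, C pq :=
    hinj.tsum_eq hsupp
  rw [← hdiag]
  have hr' : (r:ℂ) ≠ 0 := by
    simpa using hr.ne'
  have hterm : ∀ q : ℕ, C (q + n, q)
      = (2 * Real.pi * (r:ℂ)^n) *
        (((-1:ℂ)^q / ((q.factorial:ℂ) * (((n+q).factorial:ℂ)))) * (w/2)^(n+2*q)) := by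
    intro q
    simp only [hC]
    rw [if_pos (by push_cast; ring)]
    rw [show n + q = q + n from Nat.add_comm n q]
    have hfq : ((q.factorial : ℂ)) ≠ 0 := by exact_mod_cast q.factorial_ne_zero
    have hfqn : (((q+n).factorial : ℂ)) ≠ 0 := by exact_mod_cast (q+n).factorial_ne_zero
    field_simp
    have hrq : (r:ℂ)^q * (r:ℂ)⁻¹^q = 1 := by rw [← mul_pow, mul_inv_cancel₀ hr', one_pow]
    have hm : (-1/2:ℂ)^q = (-1:ℂ)^q * (1/2:ℂ)^q := by rw [← mul_pow]; norm_num
    linear_combination (w^(q*2) * w^n * (r:ℂ)^n * (-1/2:ℂ)^q * (1/2:ℂ)^q * (1/2:ℂ)^n) * hrq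
      + (w^(q*2) * w^n * (r:ℂ)^n * (1/2:ℂ)^q * (1/2:ℂ)^n) * hm
  calc (∑' q : ℕ, C (q + n, q))
      = ∑' q : ℕ, (2 * Real.pi * (r:ℂ)^n) *
          (((-1:ℂ)^q / ((q.factorial:ℂ) * (((n+q).factorial:ℂ)))) * (w/2)^(n+2*q)) :=
        tsum_congr hterm
    _ = (2 * Real.pi * (r:ℂ)^n) * besselJ n w := by
        rw [tsum_mul_left]; rfl

lemma besselJ_bound (n : ℕ) (w : ℂ) (r K : ℝ) (hr : 0 < r)
    (h : ∀ θ : ℝ, (w/2 * ((r:ℂ) * Complex.exp (θ*I) - Complex.exp (-(θ*I))/(r:ℂ))).re ≤ K) :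
    ‖besselJ n w‖ * r ^ n ≤ Real.exp K := by
  have hrep := besselJ_rep n w r hr
  have hmeas : MeasurableSet (Set.Ioc (0:ℝ) (2*Real.pi)) := measurableSet_Ioc
  have hfin : volume (Set.Ioc (0:ℝ) (2*Real.pi)) < ⊤ := measure_Ioc_lt_top
  have hb : ‖∫ θ in Set.Ioc (0:ℝ) (2*Real.pi),
      Complex.exp (w/2 * (r * Complex.exp (θ * I) - Complex.exp (-(θ * I))/r)) *
        Complex.exp (-(θ * I)) ^ n‖
      ≤ Real.exp K * (volume (Set.Ioc (0:ℝ) (2*Real.pi))).toReal := by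
    apply norm_setIntegral_le_of_norm_le_const hfin
    intro θ _
    have h1 : ‖Complex.exp (-((θ:ℂ)*I))‖ = 1 := by
      rw [Complex.norm_exp]
      simp [Complex.mul_re]
    rw [norm_mul, norm_pow, h1, one_pow, mul_one, Complex.norm_exp]
    exact Real.exp_le_exp.2 (h θ)
  rw [hrep] at hb
  have hvol : (volume (Set.Ioc (0:ℝ) (2*Real.pi))).toReal = 2*Real.pi := by
    rw [Real.volume_Ioc]
    rw [ENNReal.toReal_ofReal (by nlinarith [Real.pi_pos])]
    ring
  rw [hvol] at hb
  have hlhs : ‖2 * (Real.pi:ℂ) * (r:ℂ) ^ n * besselJ n w‖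
      = 2 * Real.pi * (r ^ n * ‖besselJ n w‖) := by
    rw [norm_mul, norm_mul]
    simp [abs_of_pos Real.pi_pos, abs_of_pos hr, mul_assoc]
  rw [show ((2:ℂ) * (Real.pi:ℝ) * (r:ℂ)^n * besselJ n w)
      = 2 * (Real.pi:ℂ) * (r:ℂ)^n * besselJ n w by norm_num] at hb
  rw [hlhs] at hb
  have hpi : (0:ℝ) < 2 * Real.pi := by positivity
  nlinarith [mul_pos hpi (Real.exp_pos K)]

lemma besselJ_zero {n : ℕ} (hn : 1 ≤ n) : besselJ n 0 = 0 := by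
  rw [besselJ]
  convert tsum_zero with k
  rw [zero_div, zero_pow (by omega), mul_zero]

lemma sq_half_cpow (x : ℂ) : (x ^ ((1:ℂ)/2)) ^ 2 = x := by
  rcases eq_or_ne x 0 with rfl | hx
  · rw [Complex.zero_cpow (by norm_num)]
    simp
  · rw [Complex.cpow_def_of_ne_zero hx, ← Complex.exp_nat_mul, Nat.cast_ofNat]
    rw [show (2:ℂ) * (Complex.log x * (1/2)) = Complex.log x by ring]
    exact Complex.exp_log hx

lemma re_half_cpow_nonneg (x : ℂ) : 0 ≤ (x ^ ((1:ℂ)/2)).re := by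
  rcases eq_or_ne x 0 with rfl | hx
  · rw [Complex.zero_cpow (by norm_num)]
    simp
  · rw [Complex.cpow_def_of_ne_zero hx, Complex.exp_re]
    apply mul_nonneg (Real.exp_pos _).le
    have him : (Complex.log x * (1/2)).im = Complex.arg x / 2 := by
      simp [Complex.mul_im, Complex.log_im]
      ring
    rw [him]
    apply Real.cos_nonneg_of_mem_Icc
    constructor
    · nlinarith [Complex.neg_pi_lt_arg x]
    · nlinarith [Complex.arg_le_pi x]

lemma Omega_eq (z : ℂ) : Omega z = ‖z‖ * Real.exp (((1 - z ^ 2) ^ ((1:ℂ)/2)).re) /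
    ‖1 + (1 - z ^ 2) ^ ((1:ℂ)/2)‖ := by
  rw [Omega, norm_div, norm_mul, Complex.norm_exp]

lemma re_expr (n : ℕ) (z : ℂ) (r : ℝ) (hr : 0 < r) (θ : ℝ) :
    (((n:ℂ)*z)/2 * ((r:ℂ) * Complex.exp (θ*I) - Complex.exp (-(θ*I))/(r:ℂ))).re
      = (n/2) * (z.re * Real.cos θ * (r - r⁻¹) - z.im * Real.sin θ * (r + r⁻¹)) := by
  have h1 : Complex.exp ((θ:ℂ)*I)
      = Complex.ofReal (Real.cos θ) + Complex.ofReal (Real.sin θ) * I := by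
    rw [Complex.exp_mul_I, ← Complex.ofReal_cos, ← Complex.ofReal_sin]
  have h2 : Complex.exp (-((θ:ℂ)*I))
      = Complex.ofReal (Real.cos θ) - Complex.ofReal (Real.sin θ) * I := by
    rw [show -((θ:ℂ)*I) = ((-θ:ℝ):ℂ)*I by push_cast; ring, Complex.exp_mul_I,
      ← Complex.ofReal_cos, ← Complex.ofReal_sin, Real.cos_neg, Real.sin_neg]
    push_cast
    ring
  rw [h1, h2]
  have hr0 : r ≠ 0 := hr.ne'
  simp [Complex.div_re, Complex.mul_re, Complex.mul_im, Complex.add_re, Complex.add_im,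
    Complex.normSq_apply, Complex.cos_ofReal_re, Complex.sin_ofReal_re]
  field_simp
  ring

lemma besselJ_le_one {z : ℂ} (hz : Omega z ≤ 1) {n : ℕ} (hn : 1 ≤ n) :
    ‖besselJ n ((n:ℂ) * z)‖ ≤ 1 := by
  rcases eq_or_ne z 0 with rfl | hz0
  · rw [mul_zero, besselJ_zero hn]; simp
  set s := (1 - z^2) ^ ((1:ℂ)/2) with hsdef
  have hs2 : s^2 = 1 - z^2 := sq_half_cpow _
  have hu : 0 ≤ s.re := re_half_cpow_nonneg _
  have h1s : (1:ℂ) + s ≠ 0 := by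
    intro h
    have h' : ((1:ℂ) + s).re = 0 := by rw [h]; rfl
    rw [Complex.add_re, Complex.one_re] at h'
    linarith
  have habs1s : 0 < ‖1+s‖ := norm_pos_iff.mpr h1s
  have habsz : 0 < ‖z‖ := norm_pos_iff.mpr hz0
  have hOm : ‖z‖ * Real.exp s.re ≤ ‖1+s‖ := by
    rw [Omega_eq, ← hsdef, div_le_one habs1s] at hz
    exact hz
  set r := ‖1+s‖ / ‖z‖ with hrdef
  have hr : 0 < r := div_pos habs1s habsz
  have he : Real.exp s.re ≤ r := by
    rw [hrdef, le_div_iff₀ habsz]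
    nlinarith
  set a := z.re; set b := z.im; set u := s.re; set v := s.im
  have he1 : u^2 - v^2 = 1 - (a^2 - b^2) := by
    have h := congrArg Complex.re hs2
    simp only [pow_two, Complex.mul_re, Complex.sub_re, Complex.one_re] at h
    linear_combination h
  have he2 : u*v = -(a*b) := by
    have h := congrArg Complex.im hs2
    simp only [pow_two, Complex.mul_im, Complex.sub_im, Complex.one_im] at h
    linear_combination h / 2
  have he3 : r^2 * (a^2+b^2) = (1+u)^2 + v^2 := by
    have h1 : r * ‖z‖ = ‖1+s‖ := div_mul_cancel₀ _ habsz.ne'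
    have h2 : (‖z‖)^2 = a^2 + b^2 := by
      rw [Complex.sq_norm, Complex.normSq_apply]; ring
    have h3 : (‖1+s‖)^2 = (1+u)^2 + v^2 := by
      rw [Complex.sq_norm, Complex.normSq_apply, Complex.add_re, Complex.add_im,
        Complex.one_re, Complex.one_im]
      ring
    nlinarith [h1, h2, h3]
  have hm : 0 < a^2 + b^2 := by
    have := Complex.normSq_pos.mpr hz0
    rw [Complex.normSq_apply] at this
    nlinarith
  have hident : a^2*(r-r⁻¹)^2 + b^2*(r+r⁻¹)^2 = 4*u^2 := by
    have hkey : (a^2+b^2) * (a^2*(r^2-1)^2 + b^2*(r^2+1)^2 - 4*u^2*r^2) = 0 := by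
      linear_combination (a^2-b^2+1-u^2+v^2 - 2*((1+u)^2+v^2)) * he1
        + (4*(a*b-u*v)) * he2
        + ((1+u)^2+v^2 + r^2*(a^2+b^2) - 2*(a^2-b^2) - 4*u^2) * he3
    have hinner : a^2*(r^2-1)^2 + b^2*(r^2+1)^2 = 4*u^2*r^2 := by
      rcases mul_eq_zero.1 hkey with h | h
      · exact absurd h hm.ne'
      · linarith
    have hr0 : r ≠ 0 := hr.ne'
    field_simp
    linear_combination hinner
  have hre : ∀ θ:ℝ, (((n:ℂ)*z)/2 * ((r:ℂ) * Complex.exp (θ*I)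
      - Complex.exp (-(θ*I))/(r:ℂ))).re ≤ n * u := by
    intro θ
    rw [re_expr n z r hr θ]
    have hT : a * Real.cos θ * (r - r⁻¹) - b * Real.sin θ * (r + r⁻¹) ≤ 2*u := by
      nlinarith [sq_nonneg (a*(r-r⁻¹)*Real.sin θ + b*(r+r⁻¹)*Real.cos θ),
        Real.sin_sq_add_cos_sq θ, hident, hu,
        sq_nonneg (a * Real.cos θ * (r - r⁻¹) - b * Real.sin θ * (r + r⁻¹) + 2*u)]
    have hn0 : (0:ℝ) ≤ n := Nat.cast_nonneg n
    nlinarith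
  have hb := besselJ_bound n ((n:ℂ)*z) r ((n:ℝ)*u) hr hre
  have h2 : Real.exp ((n:ℝ)*u) = (Real.exp u)^n := by
    rw [← Real.exp_nat_mul]
  have h3 : (Real.exp u)^n ≤ r^n := pow_le_pow_left₀ (Real.exp_pos u).le he n
  have hrn : 0 < r^n := pow_pos hr n
  nlinarith [hb]

lemma Omega_SlitSet {z : ℂ} (hz : z ∈ SlitSet) : Omega z ≤ 1 := by
  obtain ⟨hb, ha⟩ := hz
  set s := (1 - z^2) ^ ((1:ℂ)/2) with hsdef
  have hs2 : s^2 = 1 - z^2 := sq_half_cpow _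
  have hu : 0 ≤ s.re := re_half_cpow_nonneg _
  set a := z.re with hadef
  set u := s.re with hudef
  set v := s.im with hvdef
  have ha2 : 1 ≤ a^2 := by nlinarith [_root_.sq_abs a, abs_nonneg a]
  have he1 : u^2 - v^2 = 1 - a^2 := by
    have h := congrArg Complex.re hs2
    simp only [pow_two, Complex.mul_re, Complex.sub_re, Complex.one_re] at h
    rw [hb] at h
    linear_combination h
  have he2 : u * v = 0 := by
    have h := congrArg Complex.im hs2
    simp only [pow_two, Complex.mul_im, Complex.sub_im, Complex.one_im] at h
    rw [hb] at h
    linear_combination h / 2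
  have hu0 : u = 0 := by
    rcases mul_eq_zero.1 he2 with h | h
    · exact h
    · nlinarith [he1, hu, ha2]
  have hnsq : Complex.normSq (1 + s) = a^2 := by
    rw [Complex.normSq_apply, Complex.add_re, Complex.add_im, Complex.one_re, Complex.one_im]
    linear_combination (-1) * he1 + (2 + 2*u) * hu0
  have hnz : Complex.normSq z = a^2 := by
    rw [Complex.normSq_apply, hb]; ring
  have habs1 : ‖1+s‖ = ‖z‖ := by
    rw [Complex.norm_def, Complex.norm_def, hnsq, hnz]
  have hzne0 : z ≠ 0 := by
    intro h
    have ha0 : a = 0 := by rw [hadef, h, Complex.zero_re]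
    rw [ha0] at ha
    norm_num at ha
  have hzne : ‖z‖ ≠ 0 := norm_ne_zero_iff.mpr hzne0
  rw [Omega_eq, ← hsdef, ← hudef, hu0, Real.exp_zero, mul_one, habs1, div_self hzne]


end KapteynAux

/-- the Kapteyn series `Σ_{n≥1} n⁻² J_n(nz)` converges absolutely and uniformly
on `{Ω ≤ 1}`; in particular it converges at every point of `S`, even though its convergence
level is `ρ = 1`, i.e. `limsup |n⁻²|^(1/n) = 1`.
(Here the coefficient `((n : ℂ)^2)⁻¹` vanishes for `n = 0`, so the sum effectively starts at
`n = 1`.) -/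
theorem stmt_17 :
    (∃ g : ℂ → ℝ, TendstoUniformlyOn
      (fun (N : ℕ) (z : ℂ) => ∑ n ∈ Finset.range (N + 1),
        ‖((n : ℂ) ^ 2)⁻¹ * besselJ n ((n : ℂ) * z)‖)
      g atTop {z : ℂ | Omega z ≤ 1}) ∧
    (∃ F : ℂ → ℂ, TendstoUniformlyOn
      (fun (N : ℕ) (z : ℂ) => ∑ n ∈ Finset.range (N + 1),
        ((n : ℂ) ^ 2)⁻¹ * besselJ n ((n : ℂ) * z))
      F atTop {z : ℂ | Omega z ≤ 1}) ∧
    (∀ z : ℂ, Omega z ≤ 1 →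
      Summable (fun n : ℕ => ‖((n : ℂ) ^ 2)⁻¹ * besselJ n ((n : ℂ) * z)‖)) ∧
    (∀ z ∈ SlitSet, ∃ L : ℂ, Tendsto (fun N : ℕ => ∑ n ∈ Finset.range (N + 1),
      ((n : ℂ) ^ 2)⁻¹ * besselJ n ((n : ℂ) * z)) atTop (𝓝 L)) ∧
    limsup (fun n : ℕ => ‖((n : ℂ) ^ 2)⁻¹‖ ^ ((n : ℝ)⁻¹)) atTop = 1 := by
  have hbound : ∀ z : ℂ, Omega z ≤ 1 → ∀ n : ℕ,
      ‖((n : ℂ)^2)⁻¹ * besselJ n ((n:ℂ)*z)‖ ≤ ((n:ℝ)^2)⁻¹ := by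
    intro z hz n
    rw [norm_mul, norm_inv, norm_pow, Complex.norm_natCast]
    rcases Nat.eq_zero_or_pos n with rfl | hn
    · simp
    · have h2 := KapteynAux.besselJ_le_one hz hn
      have h3 : (0:ℝ) ≤ ((n:ℝ)^2)⁻¹ := by positivity
      calc ((n:ℝ)^2)⁻¹ * ‖besselJ n ((n:ℂ)*z)‖
          ≤ ((n:ℝ)^2)⁻¹ * 1 := mul_le_mul_of_nonneg_left h2 h3
        _ = ((n:ℝ)^2)⁻¹ := mul_one _
  have hsumu : Summable (fun n : ℕ => ((n:ℝ)^2)⁻¹) := by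
    simpa [one_div] using Real.summable_one_div_nat_pow.mpr (by norm_num : 1 < 2)
  -- a reindexing helper
  have hshift : ∀ {E : Type} [inst : UniformSpace E] (F : ℕ → ℂ → E) (f : ℂ → E)
      (s : Set ℂ), TendstoUniformlyOn F f atTop s →
      TendstoUniformlyOn (fun N => F (N + 1)) f atTop s := by
    intro E _ F f s h u hu
    exact (tendsto_add_atTop_nat 1).eventually (h u hu)
  refine ⟨⟨fun z => ∑' n : ℕ, ‖((n : ℂ)^2)⁻¹ * besselJ n ((n:ℂ)*z)‖, ?_⟩,
    ⟨fun z => ∑' n : ℕ, ((n : ℂ)^2)⁻¹ * besselJ n ((n:ℂ)*z), ?_⟩, ?_, ?_, ?_⟩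
  · refine hshift
      (fun N z => ∑ n ∈ Finset.range N, ‖((n : ℂ)^2)⁻¹ * besselJ n ((n:ℂ)*z)‖)
      _ _ ?_
    apply tendstoUniformlyOn_tsum_nat hsumu
    intro n z hz
    rw [Real.norm_eq_abs, abs_of_nonneg (norm_nonneg _)]
    exact hbound z hz n
  · refine hshift
      (fun N z => ∑ n ∈ Finset.range N, ((n : ℂ)^2)⁻¹ * besselJ n ((n:ℂ)*z))
      _ _ ?_
    apply tendstoUniformlyOn_tsum_nat hsumu
    intro n z hz
    exact hbound z hz n
  · intro z hz
    exact Summable.of_nonneg_of_le (fun n => norm_nonneg _)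
      (fun n => hbound z hz n) hsumu
  · intro z hz
    have hsabs : Summable (fun n : ℕ => ‖((n : ℂ)^2)⁻¹ * besselJ n ((n:ℂ)*z)‖) :=
      Summable.of_nonneg_of_le (fun n => norm_nonneg _)
        (fun n => hbound z (KapteynAux.Omega_SlitSet hz) n) hsumu
    have hs : Summable (fun n : ℕ => ((n : ℂ)^2)⁻¹ * besselJ n ((n:ℂ)*z)) :=
      Summable.of_norm hsabs
    refine ⟨∑' n : ℕ, ((n : ℂ)^2)⁻¹ * besselJ n ((n:ℂ)*z), ?_⟩
    have ht := hs.hasSum.tendsto_sum_nat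
    exact ht.comp (tendsto_add_atTop_nat 1)
  · -- limsup
    have htt : Tendsto (fun n : ℕ => ‖((n : ℂ)^2)⁻¹‖ ^ ((n:ℝ)⁻¹)) atTop (𝓝 1) := by
      have h0 : Tendsto (fun n : ℕ => (n:ℝ) ^ (1/(n:ℝ))) atTop (𝓝 1) :=
        tendsto_rpow_div.comp tendsto_natCast_atTop_atTop
      have h1 : Tendsto (fun n : ℕ => ((((n:ℝ) ^ ((n:ℝ))⁻¹))^(2:ℕ))⁻¹) atTop (𝓝 1) := by
        have h2 := (h0.inv₀ one_ne_zero).pow 2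
        simp only [one_div] at h2
        simpa using h2
      apply h1.congr'
      filter_upwards [eventually_ge_atTop 1] with n hn
      have hn0 : (0:ℝ) < (n:ℝ) := by exact_mod_cast hn
      have hkey : (((n:ℝ)^(2:ℕ))) ^ ((n:ℝ)⁻¹) = ((n:ℝ) ^ ((n:ℝ))⁻¹)^(2:ℕ) := by
        rw [← Real.rpow_natCast (n:ℝ) 2, ← Real.rpow_mul hn0.le,
          ← Real.rpow_natCast ((n:ℝ) ^ ((n:ℝ))⁻¹) 2, ← Real.rpow_mul hn0.le, mul_comm]
      rw [norm_inv, norm_pow, Complex.norm_natCast, Real.inv_rpow (by positivity), hkey]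
    exact htt.limsup_eq
end
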